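/- arXiv:1810.11720 — 8 statements merged into one kernel-verified Lean document; each statement's English description precedes it below -/
import Mathlib

section
/- For every real number z > 0 that is not an integer, with n = ⌊z⌋ (the integer part of z), one has 1/Γ(z) = (sin(πz)/π) · ∫₀^∞ (e^{−x} − e_{n−1}(−x)) · x^{−z} dx, where the integral is a convergent improper Riemann (Lebesgue) integral over (0, ∞). -/
open MeasureTheory Real Filter Set

/-- Truncated exponential polynomial `e_n(x) = ∑_{k=0}^{n} x^k / k!`.
Note that `e_{n-1}(x)` corresponds to `∑ k in Finset.range n, x^k / k!`. -/
noncomputable def truncExpPrev (n : ℕ) (x : ℝ) : ℝ :=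
  ∑ k ∈ Finset.range n, x ^ k / (k.factorial : ℝ)

open scoped Topology

noncomputable def fRem (n : ℕ) (x : ℝ) : ℝ := Real.exp (-x) - truncExpPrev n (-x)

lemma fRem_zero (x : ℝ) : fRem 0 x = Real.exp (-x) := by
  simp [fRem, truncExpPrev]

lemma fRem_succ_zero (n : ℕ) : fRem (n + 1) 0 = 0 := by
  simp [fRem, truncExpPrev, Finset.sum_range_succ']

lemma continuous_fRem (n : ℕ) : Continuous (fRem n) := by
  unfold fRem truncExpPrev
  exact (Real.continuous_exp.comp continuous_neg).sub
    (continuous_finset_sum _ fun k _ => ((continuous_pow k).comp continuous_neg).div_const _)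

lemma hasDerivAt_fRem (n : ℕ) (x : ℝ) :
    HasDerivAt (fRem (n + 1)) (-(fRem n x)) x := by
  have h1 : HasDerivAt (fun y : ℝ => Real.exp (-y)) (-Real.exp (-x)) x := by
    simpa using (hasDerivAt_neg x).exp
  have h2 : HasDerivAt (fun y : ℝ => truncExpPrev (n + 1) (-y))
      (∑ k ∈ Finset.range (n + 1), ((k : ℝ) * (-x) ^ (k - 1) * (-1)) / k.factorial) x := by
    apply HasDerivAt.fun_sum
    intro k _
    exact ((hasDerivAt_pow k (-x)).comp x (hasDerivAt_neg x)).div_const _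
  have hsum : ∑ k ∈ Finset.range (n + 1), ((k : ℝ) * (-x) ^ (k - 1) * (-1)) / k.factorial
      = -(truncExpPrev n (-x)) := by
    rw [Finset.sum_range_succ']
    simp only [Nat.cast_zero, zero_mul, Nat.factorial_zero, Nat.cast_one, zero_div, add_zero,
      truncExpPrev, ← Finset.sum_neg_distrib]
    apply Finset.sum_congr rfl
    intro k _
    have hk : ((k : ℝ) + 1) ≠ 0 := by positivity
    have hfac : ((k + 1).factorial : ℝ) = ((k : ℝ) + 1) * k.factorial := by
      push_cast [Nat.factorial_succ]; ring
    simp only [Nat.add_sub_cancel, Nat.cast_add, Nat.cast_one, hfac]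
    have hfk : (k.factorial : ℝ) ≠ 0 := Nat.cast_ne_zero.mpr k.factorial_ne_zero
    field_simp
  have h := h1.sub h2
  rw [hsum] at h
  have h' : HasDerivAt (fun y : ℝ => Real.exp (-y) - truncExpPrev (n + 1) (-y))
      (-(fRem n x)) x := by
    have e : -(fRem n x) = -Real.exp (-x) - -truncExpPrev n (-x) := by
      simp only [fRem]
      ring
    rw [e]
    exact h
  exact h'

lemma fRem_eq_neg_integral (n : ℕ) (x : ℝ) :
    fRem (n + 1) x = -∫ t in (0:ℝ)..x, fRem n t := by
  have := intervalIntegral.integral_eq_sub_of_hasDerivAt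
    (f := fRem (n + 1)) (f' := fun t => -(fRem n t))
    (fun t _ => hasDerivAt_fRem n t)
    (((continuous_fRem n).neg).intervalIntegrable 0 x)
  rw [fRem_succ_zero, sub_zero] at this
  rw [← this, intervalIntegral.integral_neg]

lemma abs_fRem_le (n : ℕ) : ∀ x : ℝ, 0 ≤ x → |fRem n x| ≤ x ^ n / n.factorial := by
  induction n with
  | zero =>
    intro x hx
    rw [fRem_zero]
    simp only [pow_zero, Nat.factorial_zero, Nat.cast_one, div_one]
    rw [abs_of_pos (Real.exp_pos _)]
    simpa using Real.exp_le_exp.mpr (neg_nonpos.mpr hx)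
  | succ n ih =>
    intro x hx
    rw [fRem_eq_neg_integral, abs_neg]
    calc |∫ t in (0:ℝ)..x, fRem n t| ≤ ∫ t in (0:ℝ)..x, |fRem n t| :=
          intervalIntegral.abs_integral_le_integral_abs hx
      _ ≤ ∫ t in (0:ℝ)..x, t ^ n / n.factorial := by
          apply intervalIntegral.integral_mono_on hx
            ((continuous_fRem n).abs.intervalIntegrable 0 x)
            (((continuous_pow n).div_const _).intervalIntegrable 0 x)
          intro t ht
          exact ih t ht.1
      _ = x ^ (n + 1) / (n + 1).factorial := by
          rw [intervalIntegral.integral_div, integral_pow]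
          have : ((n + 1).factorial : ℝ) = (n + 1) * n.factorial := by
            push_cast [Nat.factorial_succ]; ring
          rw [this]
          have h1 : ((n : ℝ) + 1) ≠ 0 := by positivity
          have h2 : (n.factorial : ℝ) ≠ 0 := Nat.cast_ne_zero.mpr n.factorial_ne_zero
          field_simp
          simp

lemma contOn_fRem_rpow (n : ℕ) (z : ℝ) {s : Set ℝ} (hs : ∀ x ∈ s, x ≠ (0:ℝ)) :
    ContinuousOn (fun x : ℝ => fRem n x * x ^ (-z)) s :=
  ((continuous_fRem n).continuousOn).mul
    (continuousOn_id.rpow_const fun x hx => Or.inl (hs x hx))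

lemma integrableOn_fRem_rpow {n : ℕ} {z : ℝ} (h1 : (n : ℝ) < z) (h2 : z < n + 1) :
    IntegrableOn (fun x : ℝ => fRem n x * x ^ (-z)) (Ioi 0) := by
  rw [← Set.Ioc_union_Ioi_eq_Ioi (zero_le_one (α := ℝ))]
  apply IntegrableOn.union
  · -- on (0,1]
    have hb : IntegrableOn (fun x : ℝ => x ^ ((n : ℝ) - z) / n.factorial) (Ioc 0 1) := by
      apply Integrable.div_const
      have := intervalIntegral.intervalIntegrable_rpow' (a := (0:ℝ)) (b := 1) (r := (n : ℝ) - z) (by linarith)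
      rwa [intervalIntegrable_iff, uIoc_of_le (zero_le_one (α := ℝ))] at this
    refine hb.mono'
      ((contOn_fRem_rpow n z (fun x hx => ne_of_gt hx.1)).aestronglyMeasurable
        measurableSet_Ioc) ?_
    rw [ae_restrict_iff' measurableSet_Ioc]
    filter_upwards with x hx
    have hx0 : (0:ℝ) < x := hx.1
    have hrne : (0:ℝ) ≤ x ^ (-z) := Real.rpow_nonneg hx0.le _
    rw [norm_mul, Real.norm_eq_abs, Real.norm_eq_abs, abs_of_nonneg hrne]
    calc |fRem n x| * x ^ (-z) ≤ x ^ n / n.factorial * x ^ (-z) :=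
          mul_le_mul_of_nonneg_right (abs_fRem_le n x hx0.le) hrne
      _ = x ^ ((n : ℝ) - z) / n.factorial := by
          rw [← Real.rpow_natCast x n, div_mul_eq_mul_div, ← Real.rpow_add hx0, sub_eq_add_neg]
  · -- on (1,∞)
    have key : IntegrableOn (fun x : ℝ => Real.exp (-x) * x ^ (-z)
        - ∑ k ∈ Finset.range n, ((-1:ℝ) ^ k / k.factorial) * x ^ ((k : ℝ) - z)) (Ioi 1) := by
      apply Integrable.sub
      · refine (exp_neg_integrableOn_Ioi 1 one_pos).mono'
          ((((Real.continuous_exp.comp continuous_neg).continuousOn).mul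
            (continuousOn_id.rpow_const fun x hx =>
              Or.inl (ne_of_gt (lt_trans one_pos hx)))).aestronglyMeasurable
            measurableSet_Ioi) ?_
        rw [ae_restrict_iff' measurableSet_Ioi]
        filter_upwards with x hx
        have hx1 : (1:ℝ) ≤ x := le_of_lt hx
        rw [norm_mul, Real.norm_eq_abs, Real.norm_eq_abs,
          abs_of_pos (Real.exp_pos _), abs_of_nonneg (Real.rpow_nonneg (by linarith) _)]
        have hle : x ^ (-z) ≤ 1 := Real.rpow_le_one_of_one_le_of_nonpos hx1 (by linarith)
        have hneg : (-1:ℝ) * x = -x := by ring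
        rw [hneg]
        nlinarith [Real.exp_pos (-x)]
      · apply integrable_finset_sum
        intro k hk
        have hklt : (k : ℝ) - z < -1 := by
          have : (k : ℝ) + 1 ≤ n := by exact_mod_cast Nat.succ_le_of_lt (Finset.mem_range.mp hk)
          linarith
        exact (integrableOn_Ioi_rpow_of_lt hklt one_pos).const_mul _
    refine key.congr_fun ?_ measurableSet_Ioi
    intro x hx
    have hx0 : (0:ℝ) < x := lt_trans one_pos hx
    simp only [fRem, truncExpPrev, sub_mul, Finset.sum_mul]
    congr 1
    apply Finset.sum_congr rfl
    intro k _
    have hxx : x ^ ((k : ℝ) - z) = x ^ (k : ℕ) * x ^ (-z) := by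
      rw [← Real.rpow_natCast x k, ← Real.rpow_add hx0, sub_eq_add_neg]
    rw [hxx, neg_pow]
    ring

lemma fRem_mul_rpow_eq (n : ℕ) (z : ℝ) {x : ℝ} (hx : 0 < x) :
    fRem n x * x ^ (1 - z) = Real.exp (-x) * x ^ (1 - z)
      - ∑ k ∈ Finset.range n, ((-1:ℝ) ^ k / k.factorial) * x ^ ((k : ℝ) + 1 - z) := by
  simp only [fRem, truncExpPrev, sub_mul, Finset.sum_mul]
  congr 1
  apply Finset.sum_congr rfl
  intro k _
  have hxx : x ^ ((k : ℝ) + 1 - z) = x ^ (k : ℕ) * x ^ (1 - z) := by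
    rw [← Real.rpow_natCast x k, ← Real.rpow_add hx]
    congr 1
    ring
  rw [hxx, neg_pow]
  ring

lemma tendsto_G_atTop (n : ℕ) (z : ℝ) (hz : (n : ℝ) + 1 < z) :
    Tendsto (fun x : ℝ => fRem (n + 1) x * x ^ (1 - z) / (1 - z)) atTop (𝓝 0) := by
  have hexp : Tendsto (fun x : ℝ => Real.exp (-x) * x ^ (1 - z)) atTop (𝓝 0) := by
    have := tendsto_rpow_mul_exp_neg_mul_atTop_nhds_zero (1 - z) 1 one_pos
    refine this.congr fun x => ?_
    rw [mul_comm]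
    norm_num
  have hpow : ∀ k ∈ Finset.range (n + 1),
      Tendsto (fun x : ℝ => ((-1:ℝ) ^ k / k.factorial) * x ^ ((k : ℝ) + 1 - z)) atTop
        (𝓝 (((-1:ℝ) ^ k / k.factorial) * 0)) := by
    intro k hk
    apply Tendsto.const_mul
    have hkn : (k : ℝ) ≤ n := by
      exact_mod_cast Nat.lt_succ_iff.mp (Finset.mem_range.mp hk)
    have := tendsto_rpow_neg_atTop (show (0:ℝ) < z - ((k : ℝ) + 1) by linarith)
    refine this.congr fun x => ?_
    congr 1
    ring
  have hsum := tendsto_finset_sum (Finset.range (n + 1)) hpow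
  have hfin := (hexp.sub hsum).div_const (1 - z)
  have hzero : ((0:ℝ) - ∑ k ∈ Finset.range (n + 1), ((-1:ℝ) ^ k / k.factorial) * 0) / (1 - z)
      = 0 := by simp
  rw [hzero] at hfin
  refine hfin.congr' ?_
  filter_upwards [eventually_gt_atTop (0:ℝ)] with x hx
  rw [← fRem_mul_rpow_eq (n + 1) z hx]

lemma contWithin_G (n : ℕ) (z : ℝ) (hz1 : (1:ℝ) < z) (hz2 : z < (n : ℝ) + 2) :
    ContinuousWithinAt (fun x : ℝ => fRem (n + 1) x * x ^ (1 - z) / (1 - z)) (Ici 0) 0 := by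
  rw [← Set.Ioi_insert, continuousWithinAt_insert_self]
  have hf0 : fRem (n + 1) 0 * (0:ℝ) ^ (1 - z) / (1 - z) = 0 := by
    rw [fRem_succ_zero]; simp
  unfold ContinuousWithinAt
  have hf0' : (fun x : ℝ => fRem (n + 1) x * x ^ (1 - z) / (1 - z)) 0 = 0 := hf0
  rw [hf0']
  have hzne : |1 - z| ≠ 0 := by rw [abs_ne_zero]; linarith
  have hp : (0:ℝ) < (n : ℝ) + 2 - z := by linarith
  apply squeeze_zero_norm' (a := fun x : ℝ => x ^ ((n : ℝ) + 2 - z) / ((n+1).factorial * |1 - z|))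
  · filter_upwards [self_mem_nhdsWithin] with x (hx : (0:ℝ) < x)
    have hr : (0:ℝ) ≤ x ^ (1 - z) := Real.rpow_nonneg hx.le _
    rw [norm_div, norm_mul, Real.norm_eq_abs, Real.norm_eq_abs, Real.norm_eq_abs,
      abs_of_nonneg hr]
    have hb := abs_fRem_le (n + 1) x hx.le
    have key : x ^ (n + 1) / (n + 1).factorial * x ^ (1 - z)
        = x ^ ((n : ℝ) + 2 - z) / (n + 1).factorial := by
      rw [← Real.rpow_natCast x (n + 1), div_mul_eq_mul_div, ← Real.rpow_add hx]
      congr 2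
      push_cast
      ring
    calc |fRem (n + 1) x| * x ^ (1 - z) / |1 - z|
        ≤ x ^ (n + 1) / (n + 1).factorial * x ^ (1 - z) / |1 - z| := by
          exact (div_le_div_iff_of_pos_right (abs_pos.mpr (by linarith))).mpr
            (mul_le_mul_of_nonneg_right hb hr)
      _ = x ^ ((n : ℝ) + 2 - z) / ((n+1).factorial * |1 - z|) := by
          rw [key]; rw [div_div]
  · have hcont := (Real.continuousAt_rpow_const 0 ((n : ℝ) + 2 - z) (Or.inr hp.le)).tendsto
    have h0 : (0:ℝ) ^ ((n : ℝ) + 2 - z) = 0 := Real.zero_rpow hp.ne'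
    rw [h0] at hcont
    have := (hcont.mono_left (nhdsWithin_le_nhds (s := Ioi (0:ℝ)))).div_const
      (((n+1).factorial : ℝ) * |1 - z|)
    simpa using this

lemma ibp_step (n : ℕ) (z : ℝ) (h1 : (n : ℝ) + 1 < z) (h2 : z < (n : ℝ) + 2) :
    ∫ x in Ioi (0:ℝ), fRem (n + 1) x * x ^ (-z)
      = (1 / (1 - z)) * ∫ x in Ioi (0:ℝ), fRem n x * x ^ (-(z - 1)) := by
  have hz1 : (1:ℝ) < z := by
    have : (0:ℝ) ≤ n := n.cast_nonneg
    linarith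
  have hzne : (1:ℝ) - z ≠ 0 := by linarith
  have hIA : IntegrableOn (fun x : ℝ => fRem n x * x ^ (-(z - 1))) (Ioi 0) :=
    integrableOn_fRem_rpow (by linarith) (by linarith)
  have hIB : IntegrableOn (fun x : ℝ => fRem (n + 1) x * x ^ (-z)) (Ioi 0) :=
    integrableOn_fRem_rpow (by push_cast; linarith) (by push_cast; linarith)
  have hderiv : ∀ x ∈ Ioi (0:ℝ),
      HasDerivAt (fun x : ℝ => fRem (n + 1) x * x ^ (1 - z) / (1 - z))
        (fRem (n + 1) x * x ^ (-z) + (-(1 / (1 - z))) * (fRem n x * x ^ (-(z - 1)))) x := by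
    intro x hx
    have hx0 : (0:ℝ) < x := hx
    have hp : HasDerivAt (fun y : ℝ => y ^ (1 - z)) ((1 - z) * x ^ (1 - z - 1)) x :=
      Real.hasDerivAt_rpow_const (Or.inl hx0.ne')
    have hder := ((hasDerivAt_fRem n x).mul hp).div_const (1 - z)
    have heq : (-(fRem n x) * x ^ (1 - z) + fRem (n + 1) x * ((1 - z) * x ^ (1 - z - 1)))
          / (1 - z)
        = fRem (n + 1) x * x ^ (-z) + (-(1 / (1 - z))) * (fRem n x * x ^ (-(z - 1))) := by
      rw [show (1:ℝ) - z - 1 = -z by ring, show -(z - 1) = 1 - z by ring]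
      field_simp
      ring
    rwa [heq] at hder
  have hint : IntegrableOn (fun x : ℝ =>
      fRem (n + 1) x * x ^ (-z) + (-(1 / (1 - z))) * (fRem n x * x ^ (-(z - 1)))) (Ioi 0) :=
    hIB.add (hIA.const_mul _)
  have h0 := integral_Ioi_of_hasDerivAt_of_tendsto
    (contWithin_G n z hz1 h2) hderiv hint (tendsto_G_atTop n z h1)
  rw [integral_add hIB (hIA.const_mul _), integral_const_mul] at h0
  have hG0 : fRem (n + 1) 0 * (0:ℝ) ^ (1 - z) / (1 - z) = 0 := by
    rw [fRem_succ_zero]; simp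
  rw [hG0, zero_sub, neg_zero] at h0
  have := h0
  linarith [this]

lemma key_integral (n : ℕ) : ∀ z : ℝ, (n : ℝ) < z → z < (n : ℝ) + 1 →
    ∫ x in Ioi (0:ℝ), fRem n x * x ^ (-z) = Real.Gamma (1 - z) := by
  induction n with
  | zero =>
    intro z hz1 hz2
    norm_num at hz1 hz2
    rw [Real.Gamma_eq_integral (by linarith : (0:ℝ) < 1 - z)]
    simp only [show (1:ℝ) - z - 1 = -z by ring]
    apply setIntegral_congr_fun measurableSet_Ioi
    intro x _
    simp [fRem_zero]
  | succ n ih =>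
    intro z hz1 hz2
    push_cast at hz1 hz2
    rw [ibp_step n z hz1 (by linarith)]
    rw [ih (z - 1) (by linarith) (by linarith)]
    have hzne : (1:ℝ) - z ≠ 0 := by
      have : (0:ℝ) ≤ n := n.cast_nonneg
      linarith
    have : Real.Gamma (1 - (z - 1)) = (1 - z) * Real.Gamma (1 - z) := by
      rw [show (1:ℝ) - (z - 1) = (1 - z) + 1 by ring, Real.Gamma_add_one hzne]
    rw [this]
    field_simp

/-- Real reciprocal Gamma representation: for non-integer `z > 0` with `n = ⌊z⌋`,
`1/Γ(z) = (sin(πz)/π) ∫₀^∞ (e^{-x} - e_{n-1}(-x)) x^{-z} dx`, the integral converging. -/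
theorem reciprocal_Gamma_real_integral_rep (z : ℝ) (hz : 0 < z) (hnint : ∀ m : ℤ, z ≠ (m : ℝ)) :
    IntegrableOn (fun x : ℝ => (Real.exp (-x) - truncExpPrev ⌊z⌋₊ (-x)) * x ^ (-z))
      (Set.Ioi 0) ∧
    1 / Real.Gamma z = (Real.sin (π * z) / π) *
      ∫ x in Set.Ioi (0 : ℝ), (Real.exp (-x) - truncExpPrev ⌊z⌋₊ (-x)) * x ^ (-z) := by
  set n := ⌊z⌋₊ with hn
  have hle : (n : ℝ) ≤ z := Nat.floor_le hz.le
  have hne : (n : ℝ) ≠ z := fun h => hnint n (by exact_mod_cast h.symm)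
  have h1 : (n : ℝ) < z := lt_of_le_of_ne hle hne
  have h2 : z < (n : ℝ) + 1 := by
    have := Nat.lt_floor_add_one z
    exact_mod_cast this
  have hInt : IntegrableOn (fun x : ℝ => fRem n x * x ^ (-z)) (Ioi 0) :=
    integrableOn_fRem_rpow h1 h2
  have hval := key_integral n z h1 h2
  have hsin : Real.sin (π * z) ≠ 0 := by
    intro h
    obtain ⟨m, hm⟩ := Real.sin_eq_zero_iff.mp h
    have hπ : π * (m : ℝ) = π * z := by linarith [hm]
    exact hnint m (mul_left_cancel₀ Real.pi_ne_zero hπ).symm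
  have hΓ : Real.Gamma z ≠ 0 := (Real.Gamma_pos_of_pos hz).ne'
  have hrefl := Real.Gamma_mul_Gamma_one_sub z
  constructor
  · exact hInt
  · rw [show (fun x : ℝ => (Real.exp (-x) - truncExpPrev n (-x)) * x ^ (-z))
        = fun x : ℝ => fRem n x * x ^ (-z) from rfl, hval]
    have hrefl2 : Real.Gamma z * Real.Gamma (1 - z) * Real.sin (π * z) = π := by
      rw [hrefl]
      field_simp
    field_simp
    nlinarith [hrefl2]
end

section
/- For every real number z > 0 that is not an integer, with n = ⌊z⌋, one has 1/Γ(z) = −(1/π) · Im ∫₀^∞ (e^{−t} − e_{n−1}(−t)) · ((−t : ℂ))^{−z} dt, where (−t)^{−z} is the principal branch of the complex power (so that for t > 0, (−t)^{−z} = t^{−z} e^{−iπz}). -/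
open MeasureTheory Real Filter Set Complex
open scoped Topology

noncomputable def fCS (n : ℕ) (t : ℝ) : ℝ := Real.exp (-t) - truncExpPrev n (-t)

lemma fCS_cont (n : ℕ) : Continuous (fCS n) := by
  unfold fCS truncExpPrev
  exact ((Real.continuous_exp.comp continuous_neg).sub
    (continuous_finset_sum _ fun k _ => ((continuous_neg.pow k).div_const _)))

lemma fCS_zero_eval (n : ℕ) : fCS (n + 1) 0 = 0 := by
  simp only [fCS, truncExpPrev, neg_zero, Real.exp_zero]
  rw [Finset.sum_eq_single 0]
  · simp
  · intro k _ hk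
    simp [zero_pow hk]
  · simp

lemma fCS_hasDerivAt (n : ℕ) (t : ℝ) : HasDerivAt (fCS (n + 1)) (-(fCS n t)) t := by
  have h1 : HasDerivAt (fun t : ℝ => Real.exp (-t)) (-(Real.exp (-t))) t := by
    simpa using (hasDerivAt_neg t).exp
  have h2 : HasDerivAt (fun t : ℝ => truncExpPrev (n + 1) (-t))
      (-(truncExpPrev n (-t))) t := by
    have hterm : ∀ k : ℕ, HasDerivAt (fun t : ℝ => (-t) ^ k / (k.factorial : ℝ))
        (-((k : ℝ) * (-t) ^ (k - 1)) / (k.factorial : ℝ)) t := by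
      intro k
      have := ((hasDerivAt_pow k (-t)).comp t (hasDerivAt_neg t)).div_const
        (k.factorial : ℝ)
      simpa [mul_comm, mul_assoc, mul_left_comm] using this
    have hsum : HasDerivAt (fun t : ℝ => ∑ k ∈ Finset.range (n + 1),
        (-t) ^ k / (k.factorial : ℝ))
        (∑ k ∈ Finset.range (n + 1), -((k : ℝ) * (-t) ^ (k - 1)) / (k.factorial : ℝ)) t :=
      HasDerivAt.fun_sum fun k _ => hterm k
    have hval : (∑ k ∈ Finset.range (n + 1), -((k : ℝ) * (-t) ^ (k - 1)) / (k.factorial : ℝ))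
        = -(truncExpPrev n (-t)) := by
      rw [Finset.sum_range_succ']
      simp only [truncExpPrev, Nat.cast_zero, pow_zero, Nat.factorial_zero, Nat.cast_one,
        zero_mul, neg_zero, zero_div, add_zero]
      rw [← Finset.sum_neg_distrib]
      refine Finset.sum_congr rfl fun i _ => ?_
      rw [Nat.factorial_succ, Nat.add_sub_cancel]
      push_cast
      field_simp
    rw [hval] at hsum
    exact hsum
  have h3 := h1.sub h2
  have : -rexp (-t) - -truncExpPrev n (-t) = -(fCS n t) := by
    simp [fCS]; ring
  rw [this] at h3
  exact h3.congr_deriv rfl |>.congr_of_eventuallyEq (by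
    filter_upwards with x
    simp [fCS, sub_eq_add_neg])

lemma fCS_eq_integral (n : ℕ) (t : ℝ) :
    fCS (n + 1) t = ∫ s in (0 : ℝ)..t, -(fCS n s) := by
  have := intervalIntegral.integral_eq_sub_of_hasDerivAt
    (f := fCS (n + 1)) (f' := fun s => -(fCS n s)) (a := (0:ℝ)) (b := t)
    (fun s _ => fCS_hasDerivAt n s)
    (((fCS_cont n).neg).intervalIntegrable 0 t)
  rw [this, fCS_zero_eval, sub_zero]

lemma fCS_bound (n : ℕ) : ∀ t : ℝ, 0 ≤ t → |fCS n t| ≤ t ^ n / (n.factorial : ℝ) := by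
  induction n with
  | zero =>
    intro t ht
    simp only [fCS, truncExpPrev, Finset.range_zero, Finset.sum_empty, sub_zero, pow_zero,
      Nat.factorial_zero, Nat.cast_one, div_one]
    rw [abs_of_pos (Real.exp_pos _)]
    exact Real.exp_le_one_iff.mpr (by linarith)
  | succ n ih =>
    intro t ht
    rw [fCS_eq_integral]
    calc |∫ s in (0:ℝ)..t, -(fCS n s)| ≤ ∫ s in (0:ℝ)..t, |(-(fCS n s))| := by
          exact intervalIntegral.abs_integral_le_integral_abs ht
      _ ≤ ∫ s in (0:ℝ)..t, s ^ n / (n.factorial : ℝ) := by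
          apply intervalIntegral.integral_mono_on ht
          · exact ((fCS_cont n).neg.abs).intervalIntegrable 0 t
          · exact (continuous_pow n |>.div_const _).intervalIntegrable 0 t
          · intro s hs
            rw [abs_neg]
            exact ih s hs.1
      _ = t ^ (n + 1) / ((n + 1).factorial : ℝ) := by
          rw [intervalIntegral.integral_div, integral_pow]
          rw [Nat.factorial_succ]
          have h1 : ((n:ℝ) + 1) ≠ 0 := by positivity
          have h2 : ((n.factorial : ℝ)) ≠ 0 := Nat.cast_ne_zero.mpr n.factorial_ne_zero
          field_simp
          rw [zero_pow (Nat.succ_ne_zero n), sub_zero]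
          push_cast
          ring

lemma fCS_mul_rpow_continuousOn (n : ℕ) (c : ℝ) :
    ContinuousOn (fun t : ℝ => fCS n t * t ^ c) (Ioi (0:ℝ)) := by
  refine ContinuousOn.mul (fCS_cont n).continuousOn ?_
  exact fun t ht => (Real.continuousAt_rpow_const t c (Or.inl (ne_of_gt ht))).continuousWithinAt

lemma fCS_integrableOn (n : ℕ) {s : ℝ} (h1 : -(n:ℝ) < s) (h2 : s < 1 - n) :
    IntegrableOn (fun t => fCS n t * t ^ (s - 1)) (Ioi (0:ℝ)) := by
  rw [← Ioc_union_Ioi_eq_Ioi (zero_le_one (α := ℝ))]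
  apply IntegrableOn.union
  · -- on Ioc 0 1
    have hmeas : AEStronglyMeasurable (fun t => fCS n t * t ^ (s - 1))
        (volume.restrict (Ioc (0:ℝ) 1)) := by
      exact ContinuousOn.aestronglyMeasurable
        ((fCS_mul_rpow_continuousOn n (s-1)).mono Ioc_subset_Ioi_self)
        measurableSet_Ioc
    have hint : IntegrableOn (fun t : ℝ => t ^ (n + s - 1) / (n.factorial : ℝ))
        (Ioc (0:ℝ) 1) := by
      have := (intervalIntegral.intervalIntegrable_rpow' (a := (0:ℝ)) (b := 1)
        (r := n + s - 1) (by linarith)).div_const (n.factorial : ℝ)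
      rwa [intervalIntegrable_iff_integrableOn_Ioc_of_le zero_le_one] at this
    refine Integrable.mono' hint hmeas ?_
    filter_upwards [ae_restrict_mem measurableSet_Ioc] with t ht
    have ht0 : 0 < t := ht.1
    rw [Real.norm_eq_abs, abs_mul, _root_.abs_of_nonneg (Real.rpow_nonneg ht0.le _)]
    calc |fCS n t| * t ^ (s - 1) ≤ t ^ n / (n.factorial : ℝ) * t ^ (s - 1) := by
          apply mul_le_mul_of_nonneg_right (fCS_bound n t ht0.le)
            (Real.rpow_nonneg ht0.le _)
      _ = t ^ (n + s - 1) / (n.factorial : ℝ) := by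
          rw [div_mul_eq_mul_div, ← Real.rpow_natCast t n, ← Real.rpow_add ht0]
          ring_nf
  · -- on Ioi 1
    have key : IntegrableOn (fun t : ℝ =>
        Real.exp (-t) * t ^ (s - 1) -
          ∑ k ∈ Finset.range n, ((-1:ℝ) ^ k / (k.factorial : ℝ)) * t ^ ((k:ℝ) + s - 1))
        (Ioi (1:ℝ)) := by
      apply Integrable.sub
      · have hmeas : AEStronglyMeasurable (fun t : ℝ => Real.exp (-t) * t ^ (s - 1))
            (volume.restrict (Ioi (1:ℝ))) := by
          apply ContinuousOn.aestronglyMeasurable ?_ measurableSet_Ioi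
          refine ContinuousOn.mul (Real.continuous_exp.comp continuous_neg).continuousOn ?_
          exact fun t ht => (Real.continuousAt_rpow_const t (s-1)
            (Or.inl (ne_of_gt (lt_trans one_pos ht)))).continuousWithinAt
        have hexp : IntegrableOn (fun t : ℝ => Real.exp (-t)) (Ioi (1:ℝ)) := by
          simpa using exp_neg_integrableOn_Ioi 1 (one_pos (α := ℝ))
        refine Integrable.mono' hexp hmeas ?_
        filter_upwards [ae_restrict_mem measurableSet_Ioi] with t ht
        have ht' : (1:ℝ) < t := ht
        rw [Real.norm_eq_abs, abs_mul, abs_of_pos (Real.exp_pos _),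
          _root_.abs_of_nonneg (Real.rpow_nonneg (by linarith) _)]
        have : t ^ (s - 1) ≤ 1 :=
          Real.rpow_le_one_of_one_le_of_nonpos ht'.le (by linarith)
        nlinarith [Real.exp_pos (-t), Real.rpow_nonneg (show (0:ℝ) ≤ t by linarith) (s-1)]
      · apply integrable_finset_sum
        intro k hk
        have hklt : (k : ℝ) + s - 1 < -1 := by
          have : (k : ℝ) ≤ n - 1 := by
            have := Finset.mem_range.mp hk
            have : (k : ℝ) + 1 ≤ n := by exact_mod_cast this
            linarith
          linarith
        exact ((integrableOn_Ioi_rpow_of_lt hklt one_pos).const_mul _)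
    apply key.congr_fun ?_ measurableSet_Ioi
    intro t ht
    have ht0 : (0:ℝ) < t := lt_trans one_pos ht
    simp only [fCS, truncExpPrev, sub_mul, Finset.sum_mul]
    congr 1
    refine Finset.sum_congr rfl fun k _ => ?_
    have h3 : (t:ℝ) ^ (k:ℕ) * t ^ (s - 1) = t ^ ((k:ℝ) + s - 1) := by
      rw [← Real.rpow_natCast t k, ← Real.rpow_add ht0, add_sub_assoc]
    have h4 : ((-t:ℝ)) ^ (k:ℕ) = (-1:ℝ) ^ k * t ^ k := by rw [neg_pow]
    rw [h4, ← h3]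
    ring

lemma fCS_expand (n : ℕ) {s t : ℝ} (ht0 : 0 < t) :
    fCS n t * t ^ (s - 1) = Real.exp (-t) * t ^ (s - 1) -
      ∑ k ∈ Finset.range n, ((-1:ℝ) ^ k / (k.factorial : ℝ)) * t ^ ((k:ℝ) + s - 1) := by
  simp only [fCS, truncExpPrev, sub_mul, Finset.sum_mul]
  congr 1
  refine Finset.sum_congr rfl fun k _ => ?_
  have h3 : (t:ℝ) ^ (k:ℕ) * t ^ (s - 1) = t ^ ((k:ℝ) + s - 1) := by
    rw [← Real.rpow_natCast t k, ← Real.rpow_add ht0, add_sub_assoc]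
  have h4 : ((-t:ℝ)) ^ (k:ℕ) = (-1:ℝ) ^ k * t ^ k := by rw [neg_pow]
  rw [h4, ← h3]
  ring

lemma fCS_tendsto_atTop (n : ℕ) {s : ℝ} (hs : s < -(n:ℝ)) :
    Tendsto (fun t : ℝ => fCS (n + 1) t * t ^ s) atTop (𝓝 0) := by
  have hse : Tendsto (fun t : ℝ => Real.exp (-t) * t ^ s) atTop (𝓝 0) := by
    apply squeeze_zero_norm' (a := fun t : ℝ => t ^ s)
    · filter_upwards [eventually_ge_atTop (1:ℝ)] with t ht
      rw [Real.norm_eq_abs, abs_mul, abs_of_pos (Real.exp_pos _),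
        _root_.abs_of_nonneg (Real.rpow_nonneg (by linarith) _)]
      nlinarith [Real.exp_pos (-t), Real.rpow_nonneg (show (0:ℝ) ≤ t by linarith) s,
        Real.exp_le_one_iff.mpr (show -t ≤ 0 by linarith)]
    · have h0s : (0:ℝ) < -s :=
        neg_pos.mpr (lt_of_lt_of_le hs (neg_nonpos.mpr (Nat.cast_nonneg n)))
      have := tendsto_rpow_neg_atTop h0s
      simpa using this
  have hsum : Tendsto (fun t : ℝ => ∑ k ∈ Finset.range (n + 1),
      ((-1:ℝ) ^ k / (k.factorial : ℝ)) * t ^ ((k:ℝ) + (s + 1) - 1)) atTop (𝓝 0) := by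
    have : Tendsto (fun t : ℝ => ∑ k ∈ Finset.range (n + 1),
        ((-1:ℝ) ^ k / (k.factorial : ℝ)) * t ^ ((k:ℝ) + (s + 1) - 1)) atTop
        (𝓝 (∑ k ∈ Finset.range (n + 1), 0)) := by
      apply tendsto_finset_sum
      intro k hk
      have hneg : (k:ℝ) + (s + 1) - 1 < 0 := by
        have : (k : ℝ) ≤ n := by exact_mod_cast Nat.lt_succ_iff.mp (Finset.mem_range.mp hk)
        linarith
      have := (tendsto_rpow_neg_atTop (y := -((k:ℝ) + (s + 1) - 1)) (by linarith)).const_mul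
        ((-1:ℝ) ^ k / (k.factorial : ℝ))
      simpa using this
    simpa using this
  have := hse.sub hsum
  rw [sub_zero] at this
  apply this.congr'
  filter_upwards [eventually_gt_atTop (0:ℝ)] with t ht
  have he := fCS_expand (n + 1) (s := s + 1) ht
  rw [show s + 1 - 1 = s by ring] at he
  exact he.symm

lemma fCS_tendsto_zero (n : ℕ) {s : ℝ} (h1 : -((n:ℝ) + 1) < s) (h2 : s < 0) :
    Tendsto (fun t : ℝ => fCS (n + 1) t * t ^ s) (𝓝[Ici (0:ℝ)] 0) (𝓝 0) := by
  apply squeeze_zero_norm' (a := fun t : ℝ => t ^ ((n:ℝ) + 1 + s) / ((n+1).factorial : ℝ))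
  · filter_upwards [self_mem_nhdsWithin] with t (ht : 0 ≤ t)
    rcases eq_or_lt_of_le ht with h | h
    · rw [← h]
      simp [fCS_zero_eval, Real.zero_rpow (ne_of_gt (by linarith : (0:ℝ) < (n:ℝ) + 1 + s))]
    · rw [Real.norm_eq_abs, abs_mul, _root_.abs_of_nonneg (Real.rpow_nonneg ht _)]
      calc |fCS (n+1) t| * t ^ s ≤ t ^ (n+1) / ((n+1).factorial : ℝ) * t ^ s :=
            mul_le_mul_of_nonneg_right (fCS_bound (n+1) t ht) (Real.rpow_nonneg ht _)
        _ = t ^ ((n:ℝ) + 1 + s) / ((n+1).factorial : ℝ) := by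
            rw [div_mul_eq_mul_div, ← Real.rpow_natCast t (n+1), ← Real.rpow_add h]
            push_cast
            ring_nf
  · have hp : (0:ℝ) < (n:ℝ) + 1 + s := by linarith
    have hc : Tendsto (fun t : ℝ => t ^ ((n:ℝ) + 1 + s)) (𝓝 0) (𝓝 0) := by
      have := (Real.continuousAt_rpow_const 0 ((n:ℝ) + 1 + s) (Or.inr hp.le)).tendsto
      rwa [Real.zero_rpow (ne_of_gt hp)] at this
    have := (hc.mono_left (nhdsWithin_le_nhds (s := Ici (0:ℝ)))).div_const
      (((n+1).factorial : ℝ))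
    simpa using this

lemma fCS_step (n : ℕ) {s : ℝ} (h1 : -(n:ℝ) - 1 < s) (h2 : s < -(n:ℝ)) :
    ∫ t in Ioi (0:ℝ), fCS n t * t ^ ((s + 1) - 1) =
      s * ∫ t in Ioi (0:ℝ), fCS (n + 1) t * t ^ (s - 1) := by
  have hs0 : s < 0 := by
    have : -(n:ℝ) ≤ 0 := neg_nonpos.mpr (Nat.cast_nonneg n)
    linarith
  have int1 : IntegrableOn (fun t => fCS n t * t ^ ((s + 1) - 1)) (Ioi (0:ℝ)) :=
    fCS_integrableOn n (s := s + 1) (by linarith) (by linarith)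
  have int2 : IntegrableOn (fun t => fCS (n + 1) t * t ^ (s - 1)) (Ioi (0:ℝ)) :=
    fCS_integrableOn (n + 1) (s := s) (by push_cast [Nat.cast_add]; linarith) (by push_cast [Nat.cast_add]; linarith)
  set F : ℝ → ℝ := fun t => fCS (n + 1) t * t ^ s with hF
  have hcont : ContinuousWithinAt F (Ici (0:ℝ)) 0 := by
    have : F 0 = 0 := by simp [hF, fCS_zero_eval]
    unfold ContinuousWithinAt
    rw [this]
    exact fCS_tendsto_zero n (by push_cast; linarith) hs0
  have hderiv : ∀ x ∈ Ioi (0:ℝ), HasDerivAt F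
      (-(fCS n x * x ^ ((s + 1) - 1)) + s * (fCS (n + 1) x * x ^ (s - 1))) x := by
    intro x hx
    have h := (fCS_hasDerivAt n x).mul
      (Real.hasDerivAt_rpow_const (p := s) (Or.inl (ne_of_gt hx)))
    refine h.congr_deriv ?_
    rw [show (s + 1) - 1 = s by ring]
    ring
  have f'int : IntegrableOn (fun x => -(fCS n x * x ^ ((s + 1) - 1)) +
      s * (fCS (n + 1) x * x ^ (s - 1))) (Ioi (0:ℝ)) :=
    int1.neg.add (int2.const_mul s)
  have htop : Tendsto F atTop (𝓝 0) := fCS_tendsto_atTop n h2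
  have key := integral_Ioi_of_hasDerivAt_of_tendsto hcont hderiv f'int htop
  have hF0 : F 0 = 0 := by simp [hF, fCS_zero_eval]
  rw [hF0, sub_zero] at key
  have hf_int : Integrable (fun x => -(fCS n x * x ^ (s + 1 - 1)))
      (volume.restrict (Ioi (0:ℝ))) := by exact int1.neg
  have hg_int : Integrable (fun x => s * (fCS (n + 1) x * x ^ (s - 1)))
      (volume.restrict (Ioi (0:ℝ))) := by exact int2.const_mul s
  rw [integral_add hf_int hg_int, integral_neg, integral_const_mul] at key
  linarith [key]

lemma fCS_gamma : ∀ n : ℕ, ∀ s : ℝ, -(n:ℝ) < s → s < 1 - n →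
    ∫ t in Ioi (0:ℝ), fCS n t * t ^ (s - 1) = Real.Gamma s := by
  intro n
  induction n with
  | zero =>
    intro s h1 h2
    rw [Real.Gamma_eq_integral (by simpa using h1)]
    refine setIntegral_congr_fun measurableSet_Ioi fun t _ => ?_
    simp [fCS, truncExpPrev]
  | succ n ih =>
    intro s h1 h2
    push_cast at h1 h2
    have hs0 : s < 0 := by
      have : -(n:ℝ) ≤ 0 := neg_nonpos.mpr (Nat.cast_nonneg n)
      linarith
    have key := fCS_step n (s := s) (by linarith) (by linarith)
    have ihs := ih (s + 1) (by linarith) (by linarith)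
    rw [ihs] at key
    rw [Real.Gamma_add_one (ne_of_lt hs0)] at key
    exact (mul_left_cancel₀ (ne_of_lt hs0) key).symm

lemma cpow_neg_real {t z : ℝ} (ht : 0 < t) :
    (-(t : ℂ)) ^ (-(z : ℂ)) =
      ((t ^ (-z) : ℝ) : ℂ) * Complex.exp ((-(z * π) : ℝ) * Complex.I) := by
  have hne : (-(t:ℂ)) ≠ 0 := by
    simp [Complex.ofReal_ne_zero, ne_of_gt ht]
  rw [Complex.cpow_def_of_ne_zero hne]
  have hlog : Complex.log (-(t:ℂ)) = (Real.log t : ℂ) + (π : ℂ) * Complex.I := by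
    have h1 : (-(t:ℂ)) = ((-t : ℝ) : ℂ) := by push_cast; ring
    rw [h1]
    apply Complex.ext
    · rw [Complex.log_re]
      rw [Complex.norm_real, Real.norm_eq_abs, abs_of_neg (by linarith : -t < 0), neg_neg]
      simp [Complex.mul_re]
    · rw [Complex.log_im, Complex.arg_ofReal_of_neg (by linarith : -t < 0)]
      simp [Complex.mul_im]
  rw [hlog]
  rw [show ((Real.log t : ℂ) + (π : ℂ) * Complex.I) * (-(z:ℂ))
      = ((-z * Real.log t : ℝ) : ℂ) + ((-(z * π) : ℝ) : ℂ) * Complex.I by push_cast; ring]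
  rw [Complex.exp_add]
  congr 1
  rw [← Complex.ofReal_exp]
  norm_cast
  rw [Real.rpow_def_of_pos ht]
  ring_nf

/-- For non-integer `z > 0` with `n = ⌊z⌋`,
`1/Γ(z) = -(1/π) · Im ∫₀^∞ (e^{-t} - e_{n-1}(-t)) (-t)^{-z} dt`,
where `(-t)^{-z}` is the principal branch complex power. -/
theorem reciprocal_Gamma_imaginary_part_rep (z : ℝ) (hz : 0 < z)
    (hnint : ∀ m : ℤ, z ≠ (m : ℝ)) :
    1 / Real.Gamma z = -(1 / π) *
      (∫ t in Set.Ioi (0 : ℝ),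
        ((Real.exp (-t) - truncExpPrev ⌊z⌋₊ (-t) : ℝ) : ℂ) * (-(t : ℂ)) ^ (-(z : ℂ))).im := by
  set n := ⌊z⌋₊ with hn
  have hn1 : (n : ℝ) < z := by
    rcases lt_or_eq_of_le (Nat.floor_le hz.le) with h | h
    · exact h
    · exact absurd h.symm (hnint n)
  have hn2 : z < n + 1 := by exact_mod_cast Nat.lt_floor_add_one z
  -- rewrite the integral
  have hIeq : (∫ t in Set.Ioi (0 : ℝ),
      ((Real.exp (-t) - truncExpPrev n (-t) : ℝ) : ℂ) * (-(t : ℂ)) ^ (-(z : ℂ)))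
      = ((Real.Gamma (1 - z) : ℝ) : ℂ) * Complex.exp ((-(z * π) : ℝ) * Complex.I) := by
    rw [show (∫ t in Set.Ioi (0 : ℝ),
        ((Real.exp (-t) - truncExpPrev n (-t) : ℝ) : ℂ) * (-(t : ℂ)) ^ (-(z : ℂ)))
        = ∫ t in Set.Ioi (0 : ℝ),
          ((fCS n t * t ^ ((1 - z) - 1) : ℝ) : ℂ) * Complex.exp ((-(z * π) : ℝ) * Complex.I)
        from ?_]
    · rw [integral_mul_const]
      congr 1
      have cc : ∀ r : ℝ, Complex.ofReal r = @RCLike.ofReal ℂ _ r := fun r => rfl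
      rw [show (∫ t in Set.Ioi (0:ℝ), ((fCS n t * t ^ ((1 - z) - 1) : ℝ) : ℂ))
          = ((∫ t in Set.Ioi (0:ℝ), fCS n t * t ^ ((1 - z) - 1) : ℝ) : ℂ) from ?_]
      · rw [fCS_gamma n (1 - z) (by linarith) (by linarith)]
      · simp_rw [cc]
        rw [_root_.integral_ofReal]
    · refine setIntegral_congr_fun measurableSet_Ioi fun t ht => ?_
      have ht0 : (0:ℝ) < t := ht
      rw [cpow_neg_real ht0]
      rw [show ((1 : ℝ) - z) - 1 = -z by ring]
      push_cast [fCS]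
      ring
  rw [hIeq]
  have him : (((Real.Gamma (1 - z) : ℝ) : ℂ) *
      Complex.exp ((-(z * π) : ℝ) * Complex.I)).im
      = Real.Gamma (1 - z) * Real.sin (-(z * π)) := by
    rw [Complex.mul_im, Complex.ofReal_re, Complex.ofReal_im, Complex.exp_ofReal_mul_I_im]
    ring
  rw [him]
  have hsin : Real.sin (π * z) ≠ 0 := by
    rw [Real.sin_ne_zero_iff]
    intro m hm
    apply hnint m
    rw [mul_comm (m:ℝ) π] at hm
    exact (mul_left_cancel₀ Real.pi_ne_zero hm).symm
  have hG : Real.Gamma z ≠ 0 := Real.Gamma_ne_zero fun m => by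
    have : (0:ℝ) ≤ m := Nat.cast_nonneg m
    intro h
    rw [h] at hz
    linarith
  have refl := Real.Gamma_mul_Gamma_one_sub z
  rw [show Real.sin (-(z * π)) = -Real.sin (π * z) by rw [Real.sin_neg, mul_comm]]
  rw [eq_div_iff hsin] at refl
  field_simp
  linear_combination -refl
end

section
/- For every real number z > 0 that is not an integer, with n = ⌊z⌋, one has 1/Γ(z) = (sin(πz)/(πz)) · ∫₀^∞ u^{1/z − 2} · ( e^{−u^{1/z}} − Σ_{k=0}^{n−1} (−1)^k u^{k/z}/k! ) du, where the integral is over (0, ∞). -/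
open MeasureTheory Real Filter Set Topology

noncomputable def Fm (m : ℕ) (t : ℝ) : ℝ :=
  Real.exp (-t) - ∑ k ∈ Finset.range m, (-1:ℝ)^k * t^k / (k.factorial : ℝ)

lemma Fm_continuous (m : ℕ) : Continuous (Fm m) := by
  unfold Fm; fun_prop

lemma Fm_zero (m : ℕ) : Fm (m+1) 0 = 0 := by
  unfold Fm
  rw [Finset.sum_eq_single 0]
  · simp
  · intro k hk hk0; simp [zero_pow hk0]
  · simp

lemma hasDerivAt_Fm (m : ℕ) (t : ℝ) : HasDerivAt (Fm (m+1)) (-(Fm m t)) t := by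
  induction m generalizing t with
  | zero =>
      have h : HasDerivAt (fun t : ℝ => Real.exp (-t) - 1) (-(Real.exp (-t))) t := by
        simpa using ((Real.hasDerivAt_exp (-t)).comp t (hasDerivAt_neg t)).sub_const 1
      have : Fm 1 = fun t : ℝ => Real.exp (-t) - 1 := by
        funext s; simp [Fm]
      rw [this]
      simpa [Fm] using h
  | succ m ih =>
      have key : Fm (m+2) = fun s => Fm (m+1) s - (-1:ℝ)^(m+1) * s^(m+1) / ((m+1).factorial : ℝ) := by
        funext s; simp [Fm, Finset.sum_range_succ]; ring
      rw [key]
      have h1 : HasDerivAt (fun s : ℝ => (-1:ℝ)^(m+1) * s^(m+1) / ((m+1).factorial : ℝ))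
          ((-1:ℝ)^(m+1) * ((m+1) * t^m) / ((m+1).factorial : ℝ)) t := by
        simpa [mul_comm, mul_assoc, div_eq_mul_inv, mul_left_comm]
          using ((hasDerivAt_pow (m+1) t).const_mul ((-1:ℝ)^(m+1))).div_const ((m+1).factorial : ℝ)
      have := (ih t).sub h1
      refine this.congr_deriv ?_
      have hfac : ((m+1).factorial : ℝ) = (m+1) * (m.factorial : ℝ) := by
        push_cast [Nat.factorial_succ]; ring
      have hm : (m:ℝ) + 1 ≠ 0 := by positivity
      have hf : (m.factorial : ℝ) ≠ 0 := by positivity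
      simp only [Fm, Finset.sum_range_succ]
      rw [hfac]
      field_simp [hfac]
      ring

lemma abs_Fm_le (m : ℕ) {t : ℝ} (ht : 0 ≤ t) : |Fm m t| ≤ t^m / (m.factorial : ℝ) := by
  induction m generalizing t with
  | zero =>
      simp only [Fm, Finset.range_zero, Finset.sum_empty, sub_zero, pow_zero,
        Nat.factorial_zero, Nat.cast_one, div_one]
      rw [abs_of_pos (Real.exp_pos _)]
      exact Real.exp_le_one_iff.mpr (by linarith)
  | succ m ih =>
      have hFTC : ∫ s in (0:ℝ)..t, -(Fm m s) = Fm (m+1) t - Fm (m+1) 0 :=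
        intervalIntegral.integral_eq_sub_of_hasDerivAt
          (fun s _ => hasDerivAt_Fm m s)
          (((Fm_continuous m).neg).intervalIntegrable 0 t)
      rw [Fm_zero, sub_zero] at hFTC
      rw [← hFTC]
      have hbound : IntervalIntegrable (fun s : ℝ => s^m / (m.factorial : ℝ)) volume 0 t := by
        apply Continuous.intervalIntegrable; fun_prop
      have h1 : ‖∫ s in (0:ℝ)..t, -(Fm m s)‖ ≤ |∫ s in (0:ℝ)..t, s^m / (m.factorial : ℝ)| := by
        apply intervalIntegral.norm_integral_le_abs_of_norm_le _ hbound
        filter_upwards [ae_restrict_mem measurableSet_uIoc] with s hs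
        rw [uIoc_of_le ht] at hs
        simpa using ih hs.1.le
      have h2 : ∫ s in (0:ℝ)..t, s^m / (m.factorial : ℝ) = t^(m+1) / ((m+1).factorial : ℝ) := by
        rw [intervalIntegral.integral_div, integral_pow]
        rw [Nat.factorial_succ]
        push_cast
        rw [zero_pow (by omega)]
        field_simp
        simp
      rw [← Real.norm_eq_abs]
      calc ‖∫ s in (0:ℝ)..t, -(Fm m s)‖ ≤ |∫ s in (0:ℝ)..t, s^m / (m.factorial : ℝ)| := h1
        _ = t^(m+1) / ((m+1).factorial : ℝ) := by
              rw [h2, abs_of_nonneg (by positivity)]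

lemma integrableOn_Fm (m : ℕ) {x : ℝ} (h1 : -(m:ℝ) < x) (h2 : x < 1 - m) :
    IntegrableOn (fun t : ℝ => t ^ (x - 1) * Fm m t) (Ioi 0) := by
  have hcont : ∀ y : ℝ, ContinuousOn (fun t : ℝ => t ^ y * Fm m t) (Ioi 0) := by
    intro y
    apply ContinuousOn.mul _ (Fm_continuous m).continuousOn
    intro t ht
    exact (Real.continuousAt_rpow_const t y (Or.inl (ne_of_gt ht))).continuousWithinAt
  have hmeas : AEStronglyMeasurable (fun t : ℝ => t ^ (x - 1) * Fm m t)
      (volume.restrict (Ioi (0:ℝ))) :=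
    (hcont (x-1)).aestronglyMeasurable measurableSet_Ioi
  have hsplit : Ioc (0:ℝ) 1 ∪ Ioi 1 = Ioi 0 := Ioc_union_Ioi_eq_Ioi zero_le_one
  rw [← hsplit]
  apply IntegrableOn.union
  · -- on Ioc 0 1
    have hbint : IntegrableOn (fun t : ℝ => t ^ (x + m - 1) / (m.factorial : ℝ)) (Ioc 0 1) := by
      have h0 : IntervalIntegrable (fun t : ℝ => t ^ (x + m - 1)) volume 0 1 :=
        intervalIntegral.intervalIntegrable_rpow' (by linarith)
      exact ((intervalIntegrable_iff_integrableOn_Ioc_of_le zero_le_one).mp h0).div_const _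
    apply Integrable.mono' hbint (hmeas.mono_set Ioc_subset_Ioi_self)
    filter_upwards [ae_restrict_mem measurableSet_Ioc] with t ht
    rw [Real.norm_eq_abs, abs_mul, abs_of_nonneg (Real.rpow_nonneg ht.1.le _)]
    calc t ^ (x-1) * |Fm m t| ≤ t ^ (x-1) * (t^m / (m.factorial : ℝ)) := by
          apply mul_le_mul_of_nonneg_left (abs_Fm_le m ht.1.le) (Real.rpow_nonneg ht.1.le _)
      _ = t ^ (x + m - 1) / (m.factorial : ℝ) := by
          rw [← Real.rpow_natCast t m, ← mul_div_assoc, ← Real.rpow_add ht.1]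
          ring_nf
  · -- on Ioi 1
    have heq : (fun t : ℝ => t ^ (x - 1) * Fm m t) =
        fun t : ℝ => t ^ (x - 1) * Real.exp (-t) -
          ∑ k ∈ Finset.range m, ((-1:ℝ)^k / (k.factorial : ℝ)) * (t ^ (x-1) * t^k) := by
      funext t; simp only [Fm, mul_sub, Finset.mul_sum]; congr 1; apply Finset.sum_congr rfl
      intro k _; ring
    rw [heq]
    apply Integrable.sub
    · -- exponential part
      apply Integrable.mono' (exp_neg_integrableOn_Ioi 1 one_pos)
      · apply ContinuousOn.aestronglyMeasurable _ measurableSet_Ioi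
        apply ContinuousOn.mul _ (Real.continuous_exp.comp continuous_neg).continuousOn
        intro t ht
        rw [mem_Ioi] at ht
        exact (Real.continuousAt_rpow_const t _ (Or.inl (by positivity))).continuousWithinAt
      · filter_upwards [ae_restrict_mem measurableSet_Ioi] with t ht
        rw [mem_Ioi] at ht
        rw [Real.norm_eq_abs, abs_mul, abs_of_nonneg (Real.rpow_nonneg (by linarith) _),
          abs_of_pos (Real.exp_pos _)]
        have h3 : t ^ (x-1) ≤ 1 :=
          Real.rpow_le_one_of_one_le_of_nonpos (le_of_lt ht) (by linarith)
        calc t ^ (x-1) * Real.exp (-t) ≤ 1 * Real.exp (-t) :=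
              mul_le_mul_of_nonneg_right h3 (Real.exp_pos _).le
          _ = Real.exp (-1 * t) := by norm_num
    · apply integrable_finset_sum
      intro k hk
      apply Integrable.const_mul
      have hklt : (k:ℝ) + 1 ≤ m := by exact_mod_cast Finset.mem_range.mp hk
      have : IntegrableOn (fun t : ℝ => t ^ (x - 1 + k)) (Ioi 1) :=
        integrableOn_Ioi_rpow_of_lt (by push_cast; linarith) one_pos
      apply this.congr_fun _ measurableSet_Ioi
      intro t ht
      rw [mem_Ioi] at ht
      show t ^ (x - 1 + (k:ℝ)) = t ^ (x-1) * t^k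
      rw [← Real.rpow_natCast t k, ← Real.rpow_add (by linarith)]

lemma CS : ∀ (m : ℕ) (x : ℝ), -(m:ℝ) < x → x < 1 - m →
    Real.Gamma x = ∫ t in Ioi 0, t ^ (x - 1) * Fm m t := by
  intro m
  induction m with
  | zero =>
      intro x h1 h2
      push_cast at h1
      rw [Real.Gamma_eq_integral (by linarith : (0:ℝ) < x)]
      apply setIntegral_congr_fun measurableSet_Ioi
      intro t _
      simp [Fm, mul_comm]
  | succ m ih =>
      intro x h1 h2
      push_cast at h1 h2
      have hx0 : x ≠ 0 := by intro h; rw [h] at h2; push_cast at h2; linarith [Nat.cast_nonneg (α := ℝ) m]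
      have hxneg : x < 0 := by have : (0:ℝ) ≤ m := Nat.cast_nonneg m; linarith
      set f : ℝ → ℝ := fun t => t ^ x * Fm (m+1) t with hf
      set f' : ℝ → ℝ := fun t => x * (t ^ (x-1) * Fm (m+1) t) - t ^ x * Fm m t with hf'
      have hderiv : ∀ t ∈ Ioi (0:ℝ), HasDerivAt f (f' t) t := by
        intro t ht
        rw [mem_Ioi] at ht
        have h := (Real.hasDerivAt_rpow_const (p := x) (Or.inl (ne_of_gt ht))).mul
          (hasDerivAt_Fm m t)
        refine h.congr_deriv ?_
        simp only [hf']
        ring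
      have I1 : IntegrableOn (fun t : ℝ => t ^ (x-1) * Fm (m+1) t) (Ioi 0) :=
        integrableOn_Fm (m+1) (by push_cast; linarith) (by push_cast; linarith)
      have I2 : IntegrableOn (fun t : ℝ => t ^ x * Fm m t) (Ioi 0) := by
        have := integrableOn_Fm m (x := x+1) (by push_cast; linarith) (by push_cast; linarith)
        rwa [add_sub_cancel_right] at this
      have f'int : IntegrableOn f' (Ioi 0) := (I1.const_mul x).sub I2
      have hf0 : f 0 = 0 := by simp [hf, Real.zero_rpow hx0]
      have hcont : ContinuousWithinAt f (Ici 0) 0 := by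
        rw [ContinuousWithinAt, hf0]
        have hb : ∀ᶠ t in 𝓝[Ici (0:ℝ)] 0, ‖f t‖ ≤ t ^ (x + (m+1)) / ((m+1).factorial : ℝ) := by
          filter_upwards [eventually_mem_nhdsWithin] with t (ht : t ∈ Ici (0:ℝ))
          rw [mem_Ici] at ht
          rcases eq_or_lt_of_le ht with h | h
          · rw [← h]
            rw [hf0, Real.zero_rpow (ne_of_gt (by push_cast; linarith : (0:ℝ) < x + (m+1))), zero_div, norm_zero]
          · rw [Real.norm_eq_abs, hf, abs_mul, abs_of_nonneg (Real.rpow_nonneg ht x)]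
            calc t ^ x * |Fm (m+1) t| ≤ t ^ x * (t^(m+1) / ((m+1).factorial : ℝ)) :=
                  mul_le_mul_of_nonneg_left (abs_Fm_le (m+1) ht) (Real.rpow_nonneg ht x)
              _ = t ^ (x + (m+1)) / ((m+1).factorial : ℝ) := by
                  rw [← Real.rpow_natCast t (m+1), ← mul_div_assoc, ← Real.rpow_add h]
                  push_cast; ring_nf
        have hg : Tendsto (fun t : ℝ => t ^ (x + (m+1)) / ((m+1).factorial : ℝ))
            (𝓝[Ici (0:ℝ)] 0) (𝓝 0) := by
          have : Tendsto (fun t : ℝ => t ^ (x + (m+1))) (𝓝[Ici 0] 0) (𝓝 ((0:ℝ) ^ (x + (m+1)))) :=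
            ((Real.continuousAt_rpow_const 0 (x + (m+1)) (Or.inr (by push_cast; linarith))).continuousWithinAt)
          rw [Real.zero_rpow (by push_cast; linarith)] at this
          simpa using this.div_const ((m+1).factorial : ℝ)
        exact squeeze_zero_norm' hb hg
      have htop : Tendsto f atTop (𝓝 0) := by
        have hexp : Tendsto (fun t : ℝ => t ^ x * Real.exp (-t)) atTop (𝓝 0) := by
          have := tendsto_rpow_mul_exp_neg_mul_atTop_nhds_zero x 1 one_pos
          simpa using this
        have hsum : Tendsto (fun t : ℝ => ∑ k ∈ Finset.range (m+1),
            (-1:ℝ)^k / (k.factorial : ℝ) * t ^ (x + k)) atTop (𝓝 0) := by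
          have h0 : (0:ℝ) = ∑ k ∈ Finset.range (m+1), (0:ℝ) := by simp
          rw [h0]
          apply tendsto_finset_sum
          intro k hk
          have hklt : (k:ℝ) ≤ m := by
            have := Finset.mem_range.mp hk; exact_mod_cast Nat.lt_succ_iff.mp this
          have hneg : 0 < -(x + k) := by linarith
          have := (tendsto_rpow_neg_atTop hneg).const_mul ((-1:ℝ)^k / (k.factorial : ℝ))
          rw [mul_zero] at this
          apply this.congr
          intro t
          rw [neg_neg]
        have := hexp.sub hsum
        rw [sub_zero] at this
        apply this.congr'
        filter_upwards [eventually_gt_atTop (0:ℝ)] with t ht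
        rw [hf]
        simp only [Fm, mul_sub, Finset.mul_sum]
        congr 1
        apply Finset.sum_congr rfl
        intro k _
        rw [Real.rpow_add ht, Real.rpow_natCast]
        ring
      have key : ∫ t in Ioi (0:ℝ), f' t = 0 - f 0 :=
        integral_Ioi_of_hasDerivAt_of_tendsto hcont hderiv f'int htop
      rw [hf0, sub_zero] at key
      have hsplit : ∫ t in Ioi (0:ℝ), f' t =
          x * (∫ t in Ioi (0:ℝ), t ^ (x-1) * Fm (m+1) t) - ∫ t in Ioi (0:ℝ), t ^ x * Fm m t := by
        rw [hf']
        rw [integral_sub (I1.const_mul x) I2, integral_const_mul]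
      have hIH : Real.Gamma (x+1) = ∫ t in Ioi (0:ℝ), t ^ x * Fm m t := by
        have := ih (x+1) (by push_cast; linarith) (by push_cast; linarith)
        rwa [add_sub_cancel_right] at this
      rw [hsplit, ← hIH, Real.Gamma_add_one hx0] at key
      have : x * Real.Gamma x = x * ∫ t in Ioi (0:ℝ), t ^ (x-1) * Fm (m+1) t := by linarith
      exact mul_left_cancel₀ hx0 this

/-- For non-integer `z > 0` with `n = ⌊z⌋`,
`1/Γ(z) = (sin(πz)/(πz)) ∫₀^∞ u^{1/z - 2} (e^{-u^{1/z}} - ∑_{k=0}^{n-1} (-1)^k u^{k/z}/k!) du`. -/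
theorem reciprocal_Gamma_substituted_rep (z : ℝ) (hz : 0 < z)
    (hnint : ∀ m : ℤ, z ≠ (m : ℝ)) :
    1 / Real.Gamma z = (Real.sin (π * z) / (π * z)) *
      ∫ u in Set.Ioi (0 : ℝ), u ^ (1 / z - 2) *
        (Real.exp (-(u ^ (1 / z))) -
          ∑ k ∈ Finset.range ⌊z⌋₊, (-1 : ℝ) ^ k * u ^ ((k : ℝ) / z) / (k.factorial : ℝ)) := by
  set n := ⌊z⌋₊ with hn
  have hzne : z ≠ 0 := hz.ne'
  have hfl : (n:ℝ) ≤ z := Nat.floor_le hz.le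
  have hne : z ≠ (n:ℝ) := by simpa using hnint n
  have hnlt : (n:ℝ) < z := lt_of_le_of_ne hfl (Ne.symm hne)
  have hlt : z < n + 1 := Nat.lt_floor_add_one z
  have hCS : Real.Gamma (1 - z) = ∫ t in Ioi 0, t ^ (1 - z - 1) * Fm n t :=
    CS n (1 - z) (by linarith) (by linarith)
  -- substitution
  have hsub := MeasureTheory.integral_comp_rpow_Ioi
    (fun t : ℝ => z * (t ^ (1 - z - 1) * Fm n t)) (one_div_ne_zero hzne)
  have hcongr : (∫ u in Ioi (0:ℝ), (|1/z| * u ^ (1/z - 1)) •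
        (z * ((u ^ (1/z)) ^ (1 - z - 1) * Fm n (u ^ (1/z))))) =
      ∫ u in Ioi (0:ℝ), u ^ (1 / z - 2) *
        (Real.exp (-(u ^ (1 / z))) -
          ∑ k ∈ Finset.range n, (-1 : ℝ) ^ k * u ^ ((k : ℝ) / z) / (k.factorial : ℝ)) := by
    apply setIntegral_congr_fun measurableSet_Ioi
    intro u hu
    rw [mem_Ioi] at hu
    have e1 : (u ^ (1/z)) ^ (1 - z - 1) = u ^ (-1 : ℝ) := by
      rw [← Real.rpow_mul hu.le]
      congr 1
      field_simp
      ring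
    have e2 : Fm n (u ^ (1/z)) = Real.exp (-(u ^ (1/z))) -
        ∑ k ∈ Finset.range n, (-1 : ℝ) ^ k * u ^ ((k : ℝ) / z) / (k.factorial : ℝ) := by
      unfold Fm
      congr 1
      apply Finset.sum_congr rfl
      intro k _
      congr 1
      rw [← Real.rpow_natCast (u ^ (1/z)) k, ← Real.rpow_mul hu.le]
      congr 1
      ring
    have e3 : u ^ (1/z - 1) * u ^ (-1 : ℝ) = u ^ (1/z - 2) := by
      rw [← Real.rpow_add hu]
      congr 1
      ring
    simp only [smul_eq_mul]
    rw [e1, e2, ← e3, abs_of_pos (by positivity : (0:ℝ) < 1/z)]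
    field_simp
  rw [hcongr] at hsub
  rw [hsub]
  beta_reduce
  rw [integral_const_mul, ← hCS]
  -- final algebra
  have hrefl := Real.Gamma_mul_Gamma_one_sub z
  have hsin : Real.sin (π * z) ≠ 0 := by
    intro h
    rcases Real.sin_eq_zero_iff.mp h with ⟨k, hk⟩
    have h2 : π * z = π * (k:ℝ) := by linear_combination -hk
    exact hnint k (mul_left_cancel₀ Real.pi_ne_zero h2)
  have hG : Real.Gamma z ≠ 0 := (Real.Gamma_pos_of_pos hz).ne'
  have hrefl' : Real.sin (π * z) * (Real.Gamma z * Real.Gamma (1 - z)) = π := by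
    rw [hrefl]
    field_simp
  field_simp
  linear_combination (-1) * hrefl'
end

section
/- For every real number z > 0 that is not an integer, with n = ⌊z⌋, one has 1/Γ(z) = (sin(πz)/π) · ∫₀^1 (1 − e_{n−1}(log u)/u) · (log(1/u))^{−z} du, where the integral is over the interval (0, 1). -/
open MeasureTheory Real Filter Set
open scoped Topology

noncomputable def expRem (n : ℕ) (t : ℝ) : ℝ := Real.exp (-t) - truncExpPrev n (-t)

lemma truncExpPrev_hasDerivAt (n : ℕ) (x : ℝ) :
    HasDerivAt (truncExpPrev (n+1)) (truncExpPrev n x) x := by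
  have : HasDerivAt (truncExpPrev (n+1))
      (∑ k ∈ Finset.range (n+1), (k : ℝ) * x ^ (k-1) / (k.factorial : ℝ)) x := by
    apply HasDerivAt.fun_sum
    intro k _
    simpa [div_eq_mul_inv, mul_comm] using ((hasDerivAt_pow k x).div_const (k.factorial : ℝ))
  convert this using 1
  show _ = _
  unfold truncExpPrev
  rw [Finset.sum_range_succ' _ n]
  simp only [Nat.cast_zero, Nat.factorial_zero, Nat.cast_one, zero_mul, zero_div, add_zero]
  apply Finset.sum_congr rfl
  intro k _
  rw [Nat.factorial_succ]
  push_cast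
  field_simp

lemma expRem_hasDerivAt (n : ℕ) (t : ℝ) :
    HasDerivAt (expRem (n+1)) (-(expRem n t)) t := by
  have h1 : HasDerivAt (fun t : ℝ => Real.exp (-t)) (-Real.exp (-t)) t := by
    simpa [Function.comp_def] using (Real.hasDerivAt_exp (-t)).comp t (hasDerivAt_neg t)
  have h2 : HasDerivAt (fun t : ℝ => truncExpPrev (n+1) (-t)) (-truncExpPrev n (-t)) t := by
    simpa [Function.comp_def] using (truncExpPrev_hasDerivAt n (-t)).comp t (hasDerivAt_neg t)
  unfold expRem
  exact (h1.fun_sub h2).congr_deriv (by ring)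

lemma expRem_continuous (n : ℕ) : Continuous (expRem n) := by
  unfold expRem truncExpPrev
  fun_prop

lemma expRem_zero_eval (n : ℕ) : expRem (n+1) 0 = 0 := by
  simp [expRem, truncExpPrev, Finset.sum_range_succ']

lemma expRem_abs_le (n : ℕ) : ∀ t : ℝ, 0 ≤ t → |expRem n t| ≤ t ^ n / (n.factorial : ℝ) := by
  induction n with
  | zero =>
    intro t ht
    simp only [expRem, truncExpPrev, Finset.range_zero, Finset.sum_empty, sub_zero,
      pow_zero, Nat.factorial_zero, Nat.cast_one, div_one]
    rw [abs_of_pos (Real.exp_pos _)]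
    exact Real.exp_le_one_iff.mpr (by linarith)
  | succ n ih =>
    intro t ht
    have hint : ∫ u in (0:ℝ)..t, -(expRem n u) = expRem (n+1) t - expRem (n+1) 0 := by
      apply intervalIntegral.integral_eq_sub_of_hasDerivAt
      · intro u _; exact expRem_hasDerivAt n u
      · exact ((expRem_continuous n).neg.intervalIntegrable 0 t)
    rw [expRem_zero_eval, sub_zero] at hint
    rw [← hint]
    have hb : ∀ u ∈ Set.Icc (0:ℝ) t, |(-(expRem n u))| ≤ u ^ n / (n.factorial : ℝ) := by
      intro u hu
      rw [abs_neg]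
      exact ih u hu.1
    calc |∫ u in (0:ℝ)..t, -(expRem n u)| ≤ ∫ u in (0:ℝ)..t, u ^ n / (n.factorial : ℝ) := by
          refine (intervalIntegral.abs_integral_le_integral_abs ht).trans ?_
          apply intervalIntegral.integral_mono_on ht
          · exact ((expRem_continuous n).neg.abs.intervalIntegrable 0 t)
          · exact (intervalIntegral.intervalIntegrable_pow n).div_const _
          · intro u hu
            rw [abs_neg]
            exact ih u hu.1
      _ = t ^ (n+1) / ((n+1).factorial : ℝ) := by
          rw [intervalIntegral.integral_div, integral_pow]
          rw [Nat.factorial_succ]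
          push_cast
          field_simp
          simp

lemma aux_measurable (n : ℕ) (r : ℝ) :
    AEStronglyMeasurable (fun t : ℝ => expRem n t * t ^ r) (volume.restrict (Ioi (0:ℝ))) := by
  apply AEStronglyMeasurable.mul
  · exact (expRem_continuous n).aestronglyMeasurable.restrict
  · exact (Measurable.aestronglyMeasurable (by fun_prop)).restrict

lemma monomial_integrableOn {k : ℕ} {s : ℝ} (hk : (k:ℝ) + s - 1 < -1) (c : ℝ) :
    IntegrableOn (fun t : ℝ => c * (-t) ^ k * t ^ (s-1)) (Ioi 1) := by
  have h : IntegrableOn (fun t : ℝ => c * (-1:ℝ)^k * t ^ ((k:ℝ) + s - 1)) (Ioi 1) :=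
    (integrableOn_Ioi_rpow_of_lt hk (zero_lt_one)).const_mul (c * (-1:ℝ)^k)
  apply IntegrableOn.congr_fun h ?_ measurableSet_Ioi
  intro t ht
  have ht0 : (0:ℝ) < t := lt_trans zero_lt_one ht
  simp only []
  rw [neg_pow, show t ^ ((k:ℝ) + s - 1) = t ^ (k:ℝ) * t ^ (s - 1) by
    rw [← Real.rpow_add ht0]; ring_nf, Real.rpow_natCast]
  ring

lemma expRem_integrableOn (n : ℕ) {s : ℝ} (h1 : -(n:ℝ) < s) (h2 : s < 1 - n) :
    IntegrableOn (fun t => expRem n t * t ^ (s-1)) (Ioi (0:ℝ)) := by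
  rw [← Set.Ioc_union_Ioi_eq_Ioi (zero_le_one)]
  apply IntegrableOn.union
  · -- on Ioc 0 1, dominate by t^(n+s-1)/n!
    have hexp : -1 < (n:ℝ) + s - 1 := by linarith
    have hint : IntegrableOn (fun t : ℝ => t ^ ((n:ℝ) + s - 1) / (n.factorial : ℝ))
        (Ioc 0 1) := by
      have := (intervalIntegral.intervalIntegrable_rpow' (a := 0) (b := 1) hexp).div_const
        (n.factorial : ℝ)
      rwa [intervalIntegrable_iff_integrableOn_Ioc_of_le zero_le_one] at this
    apply Integrable.mono hint ((aux_measurable n (s-1)).mono_measure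
      (Measure.restrict_mono Ioc_subset_Ioi_self le_rfl)) ?_
    filter_upwards [ae_restrict_mem measurableSet_Ioc] with t ht
    have ht0 : (0:ℝ) < t := ht.1
    have hb := expRem_abs_le n t ht0.le
    have hrw : t ^ ((n:ℝ) + s - 1) = t ^ n * t ^ (s-1) := by
      rw [← Real.rpow_natCast t n, ← Real.rpow_add ht0]; ring_nf
    rw [Real.norm_eq_abs, Real.norm_eq_abs, abs_mul,
      abs_of_pos (Real.rpow_pos_of_pos ht0 (s-1)),
      abs_of_nonneg (show (0:ℝ) ≤ t ^ ((n:ℝ)+s-1) / (n.factorial:ℝ) by positivity),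
      hrw, mul_div_right_comm]
    exact mul_le_mul_of_nonneg_right hb (Real.rpow_pos_of_pos ht0 _).le
  · -- on Ioi 1
    have hmain : IntegrableOn (fun t : ℝ => Real.exp (-t) * t ^ (s-1)) (Ioi 1) := by
      have hint : IntegrableOn (fun t : ℝ => Real.exp (-t)) (Ioi (1:ℝ)) := by
        simpa using exp_neg_integrableOn_Ioi (1:ℝ) (zero_lt_one)
      apply Integrable.mono hint ?_ ?_
      · apply AEStronglyMeasurable.mul
        · exact (Real.continuous_exp.comp continuous_neg).aestronglyMeasurable.restrict
        · exact (Measurable.aestronglyMeasurable (by fun_prop)).restrict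
      · filter_upwards [ae_restrict_mem measurableSet_Ioi] with t ht
        rw [Real.norm_eq_abs, Real.norm_eq_abs, abs_mul, abs_of_pos (Real.exp_pos _),
          abs_of_pos (Real.rpow_pos_of_pos (lt_trans zero_lt_one ht) _)]
        have h1 : t ^ (s-1) ≤ 1 :=
          Real.rpow_le_one_of_one_le_of_nonpos (le_of_lt ht) (by linarith)
        exact mul_le_of_le_one_right (Real.exp_pos _).le h1
    have hpoly : IntegrableOn (fun t : ℝ => truncExpPrev n (-t) * t ^ (s-1)) (Ioi 1) := by
      have : (fun t : ℝ => truncExpPrev n (-t) * t ^ (s-1)) =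
          fun t => ∑ k ∈ Finset.range n, (1 / (k.factorial : ℝ)) * (-t) ^ k * t ^ (s-1) := by
        funext t
        rw [truncExpPrev, Finset.sum_mul]
        congr 1; funext k; ring
      rw [this]
      apply integrable_finset_sum
      intro k hk
      apply monomial_integrableOn ?_ _
      have : (k:ℝ) ≤ (n:ℝ) - 1 := by
        have := Finset.mem_range.mp hk
        have : (k:ℝ) + 1 ≤ n := by exact_mod_cast this
        linarith
      linarith
    apply IntegrableOn.congr_fun (hmain.sub hpoly) ?_ measurableSet_Ioi
    intro t _
    simp [expRem, sub_mul]

lemma expRem_integral : ∀ (n : ℕ) {s : ℝ}, -(n:ℝ) < s → s < 1 - n →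
    ∫ t in Ioi (0:ℝ), expRem n t * t ^ (s-1) = Real.Gamma s := by
  intro n
  induction n with
  | zero =>
    intro s h1 h2
    simp only [Nat.cast_zero, neg_zero] at h1
    rw [Real.Gamma_eq_integral h1]
    apply setIntegral_congr_fun measurableSet_Ioi
    intro t _
    simp [expRem, truncExpPrev, mul_comm]
  | succ n ih =>
    intro s h1 h2
    push_cast at h1 h2
    have hs0 : s ≠ 0 := by
      have hn : (0:ℝ) ≤ n := Nat.cast_nonneg n
      intro h; rw [h] at h2; linarith
    have hsneg : s < 0 := by
      have hn : (0:ℝ) ≤ n := Nat.cast_nonneg n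
      linarith
    -- integration by parts
    have hu : ∀ x ∈ Ioi (0:ℝ), HasDerivAt (fun t : ℝ => t ^ s / s) (x ^ (s-1)) x := by
      intro x hx
      have := (Real.hasDerivAt_rpow_const (p := s) (Or.inl (ne_of_gt hx))).div_const s
      simpa [mul_div_assoc, mul_div_cancel_left₀ _ hs0] using this
    have hv : ∀ x ∈ Ioi (0:ℝ), HasDerivAt (expRem (n+1)) (-(expRem n x)) x :=
      fun x _ => expRem_hasDerivAt n x
    have hint1 : IntegrableOn (fun t : ℝ => expRem (n+1) t * t ^ (s-1)) (Ioi 0) :=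
      expRem_integrableOn (n+1) (by push_cast; linarith) (by push_cast; linarith)
    have hint2 : IntegrableOn (fun t : ℝ => expRem n t * t ^ s) (Ioi 0) := by
      have := expRem_integrableOn n (s := s+1) (by linarith) (by linarith)
      simpa using this
    have huv : IntegrableOn (fun t : ℝ =>
        (fun t : ℝ => t ^ (s-1)) t * expRem (n+1) t
          + (fun t : ℝ => t ^ s / s) t * (-(expRem n t))) (Ioi 0) := by
      apply Integrable.add
      · exact hint1.congr_fun (fun t _ => by ring) measurableSet_Ioi
      · have h : IntegrableOn (fun t : ℝ => -(1/s) * (expRem n t * t ^ s)) (Ioi 0) :=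
          hint2.const_mul (-(1/s))
        exact IntegrableOn.congr_fun h (fun t _ => by simp only []; ring) measurableSet_Ioi
    have h_zero : Tendsto (fun t : ℝ => (fun t : ℝ => t ^ s / s) t * expRem (n+1) t)
        (nhdsWithin 0 (Ioi 0)) (𝓝 0) := by
      rw [tendsto_zero_iff_norm_tendsto_zero]
      apply squeeze_zero' (Eventually.of_forall fun t => norm_nonneg _)
        (g := fun t => t ^ (s + (n+1)) / (|s| * ((n+1).factorial : ℝ)))
      · filter_upwards [self_mem_nhdsWithin] with t (ht : (0:ℝ) < t)
        rw [Real.norm_eq_abs, abs_mul, abs_div]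
        have hb := expRem_abs_le (n+1) t ht.le
        have h3 : |t ^ s| / |s| * |expRem (n+1) t| ≤
            t ^ s / |s| * (t ^ (n+1) / ((n+1).factorial : ℝ)) := by
          rw [abs_of_pos (Real.rpow_pos_of_pos ht s)]
          apply mul_le_mul_of_nonneg_left hb
          positivity
        refine h3.trans (le_of_eq ?_)
        rw [← Real.rpow_natCast t (n+1), div_mul_div_comm, ← Real.rpow_add ht]
        push_cast
        ring_nf
      · have : Tendsto (fun t : ℝ => t ^ (s + (n+1))) (nhdsWithin 0 (Ioi 0)) (𝓝 0) := by
          have hcont : Tendsto (fun t : ℝ => t ^ (s + ((n:ℝ)+1))) (𝓝 0) (𝓝 ((0:ℝ) ^ (s + ((n:ℝ)+1)))) :=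
            (Real.continuousAt_rpow_const 0 _ (Or.inr (by linarith))).tendsto
          rw [Real.zero_rpow (by linarith)] at hcont
          exact hcont.mono_left nhdsWithin_le_nhds
        simpa using this.div_const (|s| * ((n+1).factorial : ℝ))
    have h_infty : Tendsto (fun t : ℝ => (fun t : ℝ => t ^ s / s) t * expRem (n+1) t)
        atTop (𝓝 0) := by
      have heq : ∀ᶠ t : ℝ in atTop, (1/s) * (Real.exp (-t) * t ^ s)
          - ∑ k ∈ Finset.range (n+1), (((-1:ℝ)) ^ k / ((k.factorial : ℝ) * s)) * t ^ ((k:ℝ) + s)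
          = t ^ s / s * expRem (n+1) t := by
        filter_upwards [eventually_gt_atTop (0:ℝ)] with t ht
        rw [expRem, truncExpPrev, mul_sub]
        congr 1
        · field_simp
        · rw [Finset.mul_sum]
          apply Finset.sum_congr rfl
          intro k _
          rw [show t ^ ((k:ℝ) + s) = t ^ (k:ℝ) * t ^ s by rw [← Real.rpow_add ht],
            Real.rpow_natCast, neg_pow]
          field_simp
          ring
      apply Tendsto.congr' heq
      have hexp : Tendsto (fun t : ℝ => (1/s) * (Real.exp (-t) * t ^ s)) atTop (𝓝 0) := by
        have h1 : Tendsto (fun t : ℝ => Real.exp (-t)) atTop (𝓝 0) :=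
          Real.tendsto_exp_neg_atTop_nhds_zero
        have h2 : Tendsto (fun t : ℝ => t ^ s) atTop (𝓝 0) := by
          have := tendsto_rpow_neg_atTop (y := -s) (by linarith)
          simpa using this
        simpa using (h1.mul h2).const_mul (1/s)
      have hsum : Tendsto (fun t : ℝ => ∑ k ∈ Finset.range (n+1),
          (((-1:ℝ)) ^ k / ((k.factorial : ℝ) * s)) * t ^ ((k:ℝ) + s)) atTop (𝓝 0) := by
        have : Tendsto (fun t : ℝ => ∑ k ∈ Finset.range (n+1),
            (((-1:ℝ)) ^ k / ((k.factorial : ℝ) * s)) * t ^ ((k:ℝ) + s)) atTop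
            (𝓝 (∑ k ∈ Finset.range (n+1), (0:ℝ))) := by
          apply tendsto_finset_sum
          intro k hk
          have hks : (k:ℝ) + s < 0 := by
            have : (k:ℝ) ≤ n := by
              have := Finset.mem_range.mp hk
              exact_mod_cast Nat.lt_succ_iff.mp this
            linarith
          have := tendsto_rpow_neg_atTop (y := -((k:ℝ)+s)) (by linarith)
          simp only [neg_neg] at this
          simpa using this.const_mul (((-1:ℝ)) ^ k / ((k.factorial : ℝ) * s))
        simpa using this
      simpa using hexp.sub hsum
    have hibp := integral_Ioi_deriv_mul_eq_sub hu hv huv h_zero h_infty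
    rw [sub_zero] at hibp
    -- now extract
    have hsplit : ∫ t in Ioi (0:ℝ), ((fun t : ℝ => t ^ (s-1)) t * expRem (n+1) t
        + (fun t : ℝ => t ^ s / s) t * (-(expRem n t)))
        = (∫ t in Ioi (0:ℝ), expRem (n+1) t * t ^ (s-1))
          - (1/s) * ∫ t in Ioi (0:ℝ), expRem n t * t ^ s := by
      rw [← MeasureTheory.integral_const_mul, ← integral_sub]
      · apply setIntegral_congr_fun measurableSet_Ioi
        intro t _
        simp only []
        field_simp
        ring
      · exact hint1
      · exact hint2.const_mul _
    rw [hsplit] at hibp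
    have hGamma : ∫ t in Ioi (0:ℝ), expRem n t * t ^ s = Real.Gamma (s+1) := by
      have := ih (s := s+1) (by linarith) (by linarith)
      simpa using this
    rw [hGamma] at hibp
    rw [Real.Gamma_add_one hs0] at hibp
    have : (1/s) * (s * Real.Gamma s) = Real.Gamma s := by field_simp
    rw [this] at hibp
    linarith [hibp]

/-- Modified Euler integral of the second kind: for non-integer `z > 0` with `n = ⌊z⌋`,
`1/Γ(z) = (sin(πz)/π) ∫₀^1 (1 - e_{n-1}(log u)/u) (log(1/u))^{-z} du`. -/
theorem reciprocal_Gamma_unit_interval_rep (z : ℝ) (hz : 0 < z)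
    (hnint : ∀ m : ℤ, z ≠ (m : ℝ)) :
    1 / Real.Gamma z = (Real.sin (π * z) / π) *
      ∫ u in Set.Ioo (0 : ℝ) 1,
        (1 - truncExpPrev ⌊z⌋₊ (Real.log u) / u) * Real.log (1 / u) ^ (-z) := by
  set n := ⌊z⌋₊ with hn
  have hfloor_lt : (n:ℝ) < z := by
    rcases lt_or_eq_of_le (Nat.floor_le hz.le) with h | h
    · exact h
    · exact absurd h.symm (hnint n)
  have hlt_floor : z < (n:ℝ) + 1 := by exact_mod_cast Nat.lt_floor_add_one z
  -- substitution u = exp(-t)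
  have himg : (fun t : ℝ => Real.exp (-t)) '' (Ioi 0) = Ioo (0:ℝ) 1 := by
    ext x
    constructor
    · rintro ⟨t, ht, rfl⟩
      exact ⟨Real.exp_pos _, Real.exp_lt_one_iff.mpr (by simpa using (mem_Ioi.mp ht))⟩
    · rintro ⟨hx0, hx1⟩
      exact ⟨-Real.log x, by simpa using Real.log_neg hx0 hx1, by simp [Real.exp_log hx0]⟩
  have hderiv : ∀ x ∈ Ioi (0:ℝ), HasDerivWithinAt (fun t : ℝ => Real.exp (-t))
      (-Real.exp (-x)) (Ioi 0) x := by
    intro x _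
    exact ((Real.hasDerivAt_exp (-x)).comp x (hasDerivAt_neg x)).hasDerivWithinAt.congr_deriv
      (by ring)
  have hinj : InjOn (fun t : ℝ => Real.exp (-t)) (Ioi 0) := by
    intro a _ b _ hab
    have := Real.exp_injective hab
    linarith [neg_injective this]
  have hsub := integral_image_eq_integral_abs_deriv_smul measurableSet_Ioi hderiv hinj
    (fun u => (1 - truncExpPrev n (Real.log u) / u) * Real.log (1 / u) ^ (-z))
  rw [himg] at hsub
  rw [hsub]
  have hcongr : ∫ t in Ioi (0:ℝ), |(-Real.exp (-t))| •
      ((1 - truncExpPrev n (Real.log (Real.exp (-t))) / Real.exp (-t)) *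
        Real.log (1 / Real.exp (-t)) ^ (-z))
      = ∫ t in Ioi (0:ℝ), expRem n t * t ^ ((1-z)-1) := by
    apply setIntegral_congr_fun measurableSet_Ioi
    intro t ht
    have ht0 : (0:ℝ) < t := ht
    simp only []
    rw [abs_neg, abs_of_pos (Real.exp_pos _), Real.log_exp,
      show (1:ℝ) / Real.exp (-t) = Real.exp t by rw [Real.exp_neg]; field_simp,
      Real.log_exp, smul_eq_mul]
    rw [expRem]
    have hexp : Real.exp (-t) ≠ 0 := (Real.exp_pos _).ne'
    rw [show (1:ℝ)-z-1 = -z by ring]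
    field_simp
  rw [hcongr, expRem_integral n (by linarith) (by linarith)]
  -- reflection formula
  have hrefl := Real.Gamma_mul_Gamma_one_sub z
  have hsin : Real.sin (π * z) ≠ 0 := by
    rw [Real.sin_ne_zero_iff]
    intro m hm
    apply hnint m
    have hπ : (π:ℝ) ≠ 0 := Real.pi_ne_zero
    have h2 : π * z = π * (m:ℝ) := by linarith
    exact mul_left_cancel₀ hπ h2
  have hΓ : Real.Gamma z ≠ 0 := (Real.Gamma_pos_of_pos hz).ne'
  have hπ : (π:ℝ) ≠ 0 := Real.pi_ne_zero
  field_simp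
  field_simp at hrefl
  rw [mul_comm z π, eq_div_iff hsin] at hrefl
  linarith [hrefl]
end

section
/- For all real numbers A > 0 and B > 0 with B not an integer, and n = ⌊B⌋, the ratio of Gamma values admits the double-integral representation Γ(A)/Γ(B) = (sin(πB)/π) · ∫₀^1 ∫₀^1 (1 − e_{n−1}(log u)/u) · (log(1/u))^{−B} · (log(1/v))^{A−1} du dv, where both integrals are over the interval (0, 1). -/
open MeasureTheory Real Filter Set

/-- the key function -/
noncomputable def teF (n : ℕ) (t : ℝ) : ℝ := Real.exp (-t) - truncExpPrev n (-t)

lemma truncExpPrev_zero (x : ℝ) : truncExpPrev 0 x = 0 := by simp [truncExpPrev]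

lemma truncExpPrev_continuous (n : ℕ) : Continuous (fun t : ℝ => truncExpPrev n (-t)) := by
  unfold truncExpPrev
  exact continuous_finset_sum _ fun k _ => (((continuous_neg : Continuous fun t : ℝ => -t).pow k).div_const _)

lemma teF_continuous (n : ℕ) : Continuous (teF n) :=
  (Real.continuous_exp.comp continuous_neg).sub (truncExpPrev_continuous n)

lemma teF_hasDerivAt (n : ℕ) (t : ℝ) :
    HasDerivAt (teF (n + 1)) (-(teF n t)) t := by
  have h1 : HasDerivAt (fun t : ℝ => Real.exp (-t)) (-Real.exp (-t)) t := by
    simpa using (hasDerivAt_neg t).exp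
  have h2 : HasDerivAt (fun t : ℝ => truncExpPrev (n + 1) (-t))
      (-(truncExpPrev n (-t))) t := by
    unfold truncExpPrev
    have : ∀ k ∈ Finset.range (n + 1), HasDerivAt (fun t : ℝ => (-t) ^ k / (k.factorial : ℝ))
        ((-(k : ℝ) * (-t) ^ (k - 1)) / (k.factorial : ℝ)) t := by
      intro k _
      have := ((hasDerivAt_pow k (-t)).comp t (hasDerivAt_neg t)).div_const (k.factorial : ℝ)
      simpa [mul_comm, mul_left_comm, mul_assoc] using this
    have hsum := HasDerivAt.fun_sum this
    convert hsum using 1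
    case e'_4 => rfl
    case e'_5 => rfl
    rw [Finset.sum_range_succ']
    push_cast
    simp only [neg_zero, zero_mul, zero_div, add_zero, pow_zero, mul_one]
    rw [← Finset.sum_neg_distrib]
    apply Finset.sum_congr rfl
    intro k hk
    have hf : (k.factorial : ℝ) ≠ 0 := Nat.cast_ne_zero.mpr k.factorial_ne_zero
    have h1 : (((k : ℕ) + 1).factorial : ℝ) = ((k : ℝ) + 1) * (k.factorial : ℝ) := by
      rw [Nat.factorial_succ]; push_cast; ring
    rw [h1]
    field_simp
  have h := h1.sub h2
  have he : -(teF n t) = -Real.exp (-t) - -truncExpPrev n (-t) := by simp [teF]; ring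
  rw [he]; exact h

lemma teF_zero (n : ℕ) : teF (n + 1) 0 = 0 := by
  simp only [teF, truncExpPrev, neg_zero, Real.exp_zero, sub_eq_zero]
  rw [Finset.sum_eq_single 0]
  · simp
  · intro k _ hk; simp [zero_pow hk]
  · simp

lemma teF_bound (n : ℕ) : ∀ t : ℝ, 0 ≤ t → |teF n t| ≤ t ^ n / n.factorial := by
  induction n with
  | zero =>
    intro t ht
    simp only [teF, truncExpPrev_zero, sub_zero, pow_zero, Nat.factorial_zero, Nat.cast_one,
      div_one]
    rw [abs_of_pos (Real.exp_pos _)]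
    exact Real.exp_le_one_iff.mpr (by linarith)
  | succ n ih =>
    intro t ht
    have hint : ∀ s ∈ Set.uIcc (0 : ℝ) t, HasDerivAt (teF (n + 1)) (-(teF n s)) s :=
      fun s _ => teF_hasDerivAt n s
    have hcont : IntervalIntegrable (fun s => -(teF n s)) volume 0 t :=
      ((teF_continuous n).neg).intervalIntegrable 0 t
    have hftc := intervalIntegral.integral_eq_sub_of_hasDerivAt hint hcont
    rw [teF_zero, sub_zero] at hftc
    rw [← hftc]
    calc |∫ s in (0:ℝ)..t, -(teF n s)| ≤ ∫ s in (0:ℝ)..t, |(-(teF n s))| :=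
          intervalIntegral.abs_integral_le_integral_abs ht
      _ ≤ ∫ s in (0:ℝ)..t, s ^ n / n.factorial := by
          apply intervalIntegral.integral_mono_on ht
          · exact ((teF_continuous n).neg.abs).intervalIntegrable 0 t
          · exact ((continuous_pow n).div_const _).intervalIntegrable 0 t
          · intro s hs
            rw [abs_neg]
            exact ih s hs.1
      _ = t ^ (n + 1) / (n + 1).factorial := by
          rw [intervalIntegral.integral_div, integral_pow]
          rw [Nat.factorial_succ]
          push_cast
          field_simp
          simp

lemma teF_tail_bound (n : ℕ) {t : ℝ} (ht : 1 ≤ t) :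
    |teF n t| ≤ (n + 1 : ℝ) * t ^ ((n : ℝ) - 1) := by
  have ht0 : (0:ℝ) < t := lt_of_lt_of_le one_pos ht
  have hpow : t ^ (-1 : ℝ) ≤ t ^ ((n : ℝ) - 1) :=
    Real.rpow_le_rpow_of_exponent_le ht (by have := Nat.cast_nonneg (α := ℝ) n; linarith)
  have hexp : Real.exp (-t) ≤ t ^ ((n : ℝ) - 1) := by
    refine le_trans ?_ hpow
    rw [Real.rpow_neg_one, Real.exp_neg]
    exact inv_anti₀ ht0 (le_trans (by linarith) (Real.add_one_le_exp t))
  have hsum : |truncExpPrev n (-t)| ≤ (n : ℝ) * t ^ ((n : ℝ) - 1) := by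
    unfold truncExpPrev
    calc |∑ k ∈ Finset.range n, (-t) ^ k / (k.factorial : ℝ)|
        ≤ ∑ k ∈ Finset.range n, |(-t) ^ k / (k.factorial : ℝ)| :=
          Finset.abs_sum_le_sum_abs _ _
      _ ≤ ∑ _k ∈ Finset.range n, t ^ ((n : ℝ) - 1) := by
          apply Finset.sum_le_sum
          intro k hk
          rw [abs_div, abs_pow, abs_neg, abs_of_pos ht0, Nat.abs_cast]
          have h1 : t ^ k / (k.factorial : ℝ) ≤ t ^ k := by
            apply div_le_self (pow_nonneg ht0.le k)
            exact_mod_cast k.factorial_pos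
          refine le_trans h1 ?_
          rw [← Real.rpow_natCast t k]
          apply Real.rpow_le_rpow_of_exponent_le ht
          have hk' : (k : ℝ) + 1 ≤ n := by exact_mod_cast Finset.mem_range.mp hk
          linarith
      _ = (n : ℝ) * t ^ ((n : ℝ) - 1) := by
          rw [Finset.sum_const, Finset.card_range, nsmul_eq_mul]
  calc |teF n t| ≤ |Real.exp (-t)| + |truncExpPrev n (-t)| := abs_sub _ _
    _ ≤ t ^ ((n : ℝ) - 1) + (n : ℝ) * t ^ ((n : ℝ) - 1) := by
        rw [abs_of_pos (Real.exp_pos _)]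
        exact add_le_add hexp hsum
    _ = (n + 1 : ℝ) * t ^ ((n : ℝ) - 1) := by ring

lemma teF_mul_rpow_continuousOn (n : ℕ) (s : ℝ) :
    ContinuousOn (fun t => teF n t * t ^ s) (Set.Ioi (0:ℝ)) :=
  (teF_continuous n).continuousOn.mul
    (fun t ht => (Real.continuousAt_rpow_const t s (Or.inl (ne_of_gt ht))).continuousWithinAt)

lemma teF_integrableOn (n : ℕ) (s : ℝ) (h1 : (-1 : ℝ) < n + s) (h2 : (n : ℝ) + s < 0) :
    IntegrableOn (fun t => teF n t * t ^ s) (Set.Ioi (0:ℝ)) := by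
  have hu : Set.Ioc (0:ℝ) 1 ∪ Set.Ioi 1 = Set.Ioi 0 := Set.Ioc_union_Ioi_eq_Ioi zero_le_one
  rw [← hu]
  apply MeasureTheory.IntegrableOn.union
  · apply MeasureTheory.Integrable.mono'
      (g := fun t => t ^ ((n : ℝ) + s) / (n.factorial : ℝ))
    · exact (intervalIntegral.intervalIntegrable_rpow' h1).1.div_const _
    · exact ((teF_mul_rpow_continuousOn n s).mono Set.Ioc_subset_Ioi_self).aestronglyMeasurable
        measurableSet_Ioc
    · filter_upwards [ae_restrict_mem measurableSet_Ioc] with t ht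
      have ht0 : (0:ℝ) < t := ht.1
      rw [norm_mul, Real.norm_rpow_of_nonneg ht0.le, Real.norm_eq_abs, Real.norm_eq_abs,
        abs_of_pos ht0]
      calc |teF n t| * t ^ s ≤ (t ^ n / (n.factorial : ℝ)) * t ^ s := by
            apply mul_le_mul_of_nonneg_right (teF_bound n t ht0.le)
              (Real.rpow_nonneg ht0.le s)
        _ = t ^ ((n : ℝ) + s) / (n.factorial : ℝ) := by
            rw [Real.rpow_add ht0, ← Real.rpow_natCast t n]; ring
  · apply MeasureTheory.Integrable.mono'
      (g := fun t => (n + 1 : ℝ) * t ^ ((n : ℝ) - 1 + s))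
    · exact (integrableOn_Ioi_rpow_of_lt (by linarith) one_pos).const_mul _
    · exact ((teF_mul_rpow_continuousOn n s).mono
        (fun t (ht : t ∈ Set.Ioi (1:ℝ)) => (lt_trans one_pos ht : (0:ℝ) < t))).aestronglyMeasurable
        measurableSet_Ioi
    · filter_upwards [ae_restrict_mem measurableSet_Ioi] with t ht
      have ht1 : (1:ℝ) ≤ t := le_of_lt ht
      have ht0 : (0:ℝ) < t := lt_of_lt_of_le one_pos ht1
      rw [norm_mul, Real.norm_rpow_of_nonneg ht0.le, Real.norm_eq_abs, Real.norm_eq_abs,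
        abs_of_pos ht0]
      calc |teF n t| * t ^ s ≤ ((n + 1 : ℝ) * t ^ ((n : ℝ) - 1)) * t ^ s := by
            apply mul_le_mul_of_nonneg_right (teF_tail_bound n ht1)
              (Real.rpow_nonneg ht0.le s)
        _ = (n + 1 : ℝ) * t ^ ((n : ℝ) - 1 + s) := by
            rw [Real.rpow_add ht0]; ring

lemma teF_integral (n : ℕ) : ∀ B : ℝ, (n : ℝ) < B → B < n + 1 →
    ∫ t in Set.Ioi (0:ℝ), teF n t * t ^ (-B) = Real.Gamma (1 - B) := by
  induction n with
  | zero =>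
    intro B hB1 hB2
    push_cast at hB1 hB2
    rw [Real.Gamma_eq_integral (by linarith)]
    apply MeasureTheory.setIntegral_congr_fun measurableSet_Ioi
    intro t _
    simp only [teF, truncExpPrev_zero, sub_zero]
    rw [show (1:ℝ) - B - 1 = -B by ring]
  | succ n ih =>
    intro B hB1 hB2
    push_cast at hB1 hB2
    have hB0' : (1:ℝ) - B < 0 := by
      have : (0:ℝ) ≤ n := Nat.cast_nonneg n
      linarith
    have hB0 : (1:ℝ) - B ≠ 0 := ne_of_lt hB0'
    have hu : ∀ x ∈ Set.Ioi (0:ℝ), HasDerivAt (teF (n + 1)) (-(teF n x)) x :=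
      fun x _ => teF_hasDerivAt n x
    have hv : ∀ x ∈ Set.Ioi (0:ℝ),
        HasDerivAt (fun t : ℝ => t ^ (1 - B) / (1 - B)) (x ^ (-B)) x := by
      intro x hx
      have h := (Real.hasDerivAt_rpow_const (p := 1 - B) (Or.inl (ne_of_gt hx))).div_const (1 - B)
      have : (1 - B) * x ^ (1 - B - 1) / (1 - B) = x ^ (-B) := by
        rw [show (1:ℝ) - B - 1 = -B by ring]
        field_simp
      rwa [this] at h
    have huv' : MeasureTheory.IntegrableOn
        (teF (n + 1) * fun x : ℝ => x ^ (-B)) (Set.Ioi (0:ℝ)) := by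
      have := teF_integrableOn (n + 1) (-B) (by push_cast; linarith) (by push_cast; linarith)
      exact this
    have hu'v : MeasureTheory.IntegrableOn
        ((fun x => -(teF n x)) * fun t : ℝ => t ^ (1 - B) / (1 - B)) (Set.Ioi (0:ℝ)) := by
      have h := ((teF_integrableOn n (1 - B) (by linarith) (by linarith)).div_const
        (1 - B)).neg
      apply h.congr
      apply Filter.Eventually.of_forall
      intro x
      simp only [Pi.mul_apply, Pi.neg_apply]
      ring
    have h_zero : Filter.Tendsto (teF (n + 1) * fun t : ℝ => t ^ (1 - B) / (1 - B))
        (nhdsWithin 0 (Set.Ioi 0)) (nhds 0) := by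
      apply squeeze_zero_norm'
        (a := fun x => (1 / ((n + 1).factorial * |1 - B|)) * x ^ ((n:ℝ) + 2 - B))
      · filter_upwards [self_mem_nhdsWithin] with x hx
        have hx0 : (0:ℝ) < x := hx
        simp only [Pi.mul_apply, norm_mul, Real.norm_eq_abs]
        rw [abs_div, Real.abs_rpow_of_nonneg hx0.le, abs_of_pos hx0]
        calc |teF (n + 1) x| * (x ^ (1 - B) / |1 - B|)
            ≤ (x ^ (n + 1) / ((n + 1).factorial : ℝ)) * (x ^ (1 - B) / |1 - B|) := by
              apply mul_le_mul_of_nonneg_right (teF_bound (n + 1) x hx0.le)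
              positivity
          _ = (1 / ((n + 1).factorial * |1 - B|)) * x ^ ((n:ℝ) + 2 - B) := by
              rw [show (n:ℝ) + 2 - B = ((n + 1 : ℕ) : ℝ) + (1 - B) by push_cast; ring,
                Real.rpow_add hx0, Real.rpow_natCast]
              ring
      · have : Filter.Tendsto (fun x : ℝ => x ^ ((n:ℝ) + 2 - B)) (nhdsWithin 0 (Set.Ioi 0))
            (nhds 0) := by
          have hc := (Real.continuousAt_rpow_const 0 ((n:ℝ) + 2 - B)
            (Or.inr (by linarith))).tendsto
          rw [Real.zero_rpow (by linarith)] at hc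
          exact hc.mono_left nhdsWithin_le_nhds
        simpa using this.const_mul (1 / (((n + 1).factorial : ℝ) * |1 - B|))
    have h_infty : Filter.Tendsto (teF (n + 1) * fun t : ℝ => t ^ (1 - B) / (1 - B))
        Filter.atTop (nhds 0) := by
      apply squeeze_zero_norm'
        (a := fun x => ((n + 2 : ℝ) / |1 - B|) * x ^ ((n:ℝ) + 2 - B - 1))
      · filter_upwards [Filter.eventually_ge_atTop (1:ℝ)] with x hx1
        have hx0 : (0:ℝ) < x := lt_of_lt_of_le one_pos hx1
        simp only [Pi.mul_apply, norm_mul, Real.norm_eq_abs]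
        rw [abs_div, Real.abs_rpow_of_nonneg hx0.le, abs_of_pos hx0]
        calc |teF (n + 1) x| * (x ^ (1 - B) / |1 - B|)
            ≤ (((n + 1 : ℕ) + 1 : ℝ) * x ^ (((n + 1 : ℕ) : ℝ) - 1)) * (x ^ (1 - B) / |1 - B|) := by
              apply mul_le_mul_of_nonneg_right (teF_tail_bound (n + 1) hx1)
              positivity
          _ = ((n + 2 : ℝ) / |1 - B|) * x ^ ((n:ℝ) + 2 - B - 1) := by
              rw [show (n:ℝ) + 2 - B - 1 = (((n + 1 : ℕ) : ℝ) - 1) + (1 - B) by push_cast; ring,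
                Real.rpow_add hx0]
              push_cast
              ring
      · have := tendsto_rpow_neg_atTop (y := B - ((n:ℝ) + 1)) (by linarith)
        have h2 : Filter.Tendsto (fun x : ℝ => x ^ ((n:ℝ) + 2 - B - 1)) Filter.atTop (nhds 0) := by
          convert this using 2 with x
          ring_nf
        simpa using h2.const_mul ((n + 2 : ℝ) / |1 - B|)
    have key := MeasureTheory.integral_Ioi_mul_deriv_eq_deriv_mul hu hv huv' hu'v h_zero h_infty
    have hIH : ∫ x in Set.Ioi (0:ℝ), teF n x * x ^ (1 - B) = Real.Gamma (2 - B) := by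
      have := ih (B - 1) (by linarith) (by linarith)
      rw [show -(B - 1) = 1 - B by ring] at this
      rw [this, show (1:ℝ) - (B - 1) = 2 - B by ring]
    have hrw : ∫ x in Set.Ioi (0:ℝ), -(teF n x) * (x ^ (1 - B) / (1 - B))
        = -((1 - B)⁻¹ * Real.Gamma (2 - B)) := by
      rw [show (fun x : ℝ => -(teF n x) * (x ^ (1 - B) / (1 - B)))
          = fun x : ℝ => (-(1 - B)⁻¹) * (teF n x * x ^ (1 - B)) by funext x; rw [div_eq_mul_inv]; ring,
        MeasureTheory.integral_const_mul, hIH]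
      ring
    rw [key, hrw]
    have hG : Real.Gamma (2 - B) = (1 - B) * Real.Gamma (1 - B) := by
      rw [show (2:ℝ) - B = (1 - B) + 1 by ring]
      exact Real.Gamma_add_one hB0
    rw [hG]
    field_simp
    ring

lemma exp_neg_image : (fun t : ℝ => Real.exp (-t)) '' (Set.Ioi 0) = Set.Ioo 0 1 := by
  ext x
  constructor
  · rintro ⟨t, ht, rfl⟩
    exact ⟨Real.exp_pos _, Real.exp_lt_one_iff.mpr (by simpa using (ht : (0:ℝ) < t))⟩
  · intro hx
    refine ⟨-Real.log x, ?_, by simp [Real.exp_log hx.1]⟩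
    simp only [Set.mem_Ioi, neg_pos]
    exact Real.log_neg hx.1 hx.2

lemma integral_Ioo_comp_exp (g : ℝ → ℝ) :
    ∫ u in Set.Ioo (0:ℝ) 1, g u = ∫ t in Set.Ioi (0:ℝ), Real.exp (-t) * g (Real.exp (-t)) := by
  have hd : ∀ x : ℝ, HasDerivAt (fun t : ℝ => Real.exp (-t)) (-Real.exp (-x)) x := fun x => by
    simpa using (hasDerivAt_neg x).exp
  have hinj : Set.InjOn (fun t : ℝ => Real.exp (-t)) (Set.Ioi 0) := fun a _ b _ h => by
    have := Real.exp_injective h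
    linarith [this]
  rw [← exp_neg_image, MeasureTheory.integral_image_eq_integral_abs_deriv_smul
    measurableSet_Ioi (fun x _ => (hd x).hasDerivWithinAt) hinj g]
  apply MeasureTheory.setIntegral_congr_fun measurableSet_Ioi
  intro t _
  simp [abs_of_pos (Real.exp_pos (-t))]

lemma log_one_div_integral {A : ℝ} (hA : 0 < A) :
    ∫ v in Set.Ioo (0:ℝ) 1, Real.log (1 / v) ^ (A - 1) = Real.Gamma A := by
  rw [integral_Ioo_comp_exp, Real.Gamma_eq_integral hA]
  apply MeasureTheory.setIntegral_congr_fun measurableSet_Ioi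
  intro t _
  simp only [one_div, ← Real.exp_neg, neg_neg, Real.log_exp]

lemma inner_u_integral {B : ℝ} {n : ℕ} (h1 : (n:ℝ) < B) (h2 : B < n + 1) :
    ∫ u in Set.Ioo (0:ℝ) 1, (1 - truncExpPrev n (Real.log u) / u) * Real.log (1 / u) ^ (-B)
      = Real.Gamma (1 - B) := by
  rw [integral_Ioo_comp_exp, ← teF_integral n B h1 h2]
  apply MeasureTheory.setIntegral_congr_fun measurableSet_Ioi
  intro t _
  have he : Real.exp (-t) ≠ 0 := (Real.exp_pos _).ne'
  simp only [one_div, ← Real.exp_neg, neg_neg, Real.log_exp, teF]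
  field_simp

/-- Ratio of Gamma values as a double integral: for `A > 0`, non-integer `B > 0`, `n = ⌊B⌋`,
`Γ(A)/Γ(B) = (sin(πB)/π) ∫₀^1 ∫₀^1 (1 - e_{n-1}(log u)/u) (log(1/u))^{-B} (log(1/v))^{A-1} du dv`. -/
theorem Gamma_ratio_double_integral_rep (A B : ℝ) (hA : 0 < A) (hB : 0 < B)
    (hBnint : ∀ m : ℤ, B ≠ (m : ℝ)) :
    Real.Gamma A / Real.Gamma B = (Real.sin (π * B) / π) *
      ∫ v in Set.Ioo (0 : ℝ) 1, ∫ u in Set.Ioo (0 : ℝ) 1,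
        (1 - truncExpPrev ⌊B⌋₊ (Real.log u) / u) * Real.log (1 / u) ^ (-B) *
          Real.log (1 / v) ^ (A - 1) := by
  set n := ⌊B⌋₊ with hn
  have hn1 : (n : ℝ) < B := by
    rcases lt_or_eq_of_le (Nat.floor_le hB.le) with h | h
    · exact h
    · exact absurd h.symm (by exact_mod_cast hBnint n)
  have hn2 : B < n + 1 := by exact_mod_cast Nat.lt_floor_add_one B
  have h1 : ∀ v : ℝ, (∫ u in Set.Ioo (0 : ℝ) 1,
      (1 - truncExpPrev n (Real.log u) / u) * Real.log (1 / u) ^ (-B) *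
        Real.log (1 / v) ^ (A - 1))
      = Real.Gamma (1 - B) * Real.log (1 / v) ^ (A - 1) := by
    intro v
    rw [MeasureTheory.integral_mul_const, inner_u_integral hn1 hn2]
  have h2 : (∫ v in Set.Ioo (0 : ℝ) 1, ∫ u in Set.Ioo (0 : ℝ) 1,
      (1 - truncExpPrev n (Real.log u) / u) * Real.log (1 / u) ^ (-B) *
        Real.log (1 / v) ^ (A - 1))
      = Real.Gamma (1 - B) * Real.Gamma A := by
    simp_rw [h1]
    rw [MeasureTheory.integral_const_mul, log_one_div_integral hA]
  rw [h2]
  have hsin : Real.sin (π * B) ≠ 0 := by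
    intro h
    rw [Real.sin_eq_zero_iff] at h
    obtain ⟨m, hm⟩ := h
    exact hBnint m (by
      have h' : π * B = π * (m : ℝ) := by linarith [hm]
      exact mul_left_cancel₀ Real.pi_ne_zero h')
  have hΓB : Real.Gamma B ≠ 0 :=
    Real.Gamma_ne_zero fun m => ne_of_gt
      (lt_of_le_of_lt (neg_nonpos.mpr (Nat.cast_nonneg m)) hB)
  have hrefl := Real.Gamma_mul_Gamma_one_sub B
  have hπ : (π : ℝ) ≠ 0 := Real.pi_ne_zero
  have hΓ1B : Real.Gamma (1 - B) = π / (Real.sin (π * B) * Real.Gamma B) := by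
    rw [eq_div_iff (mul_ne_zero hsin hΓB)]
    field_simp at hrefl
    rw [mul_comm B π, eq_div_iff hsin] at hrefl
    linear_combination hrefl
  rw [hΓ1B]
  field_simp
end

section
/- For every real number z > 0 that is not an integer, with n = ⌊z⌋, one has ∫₀^∞ (e^{−x} − e_{n−1}(−x)) · x^{−z} dx = Γ(1 − z), where Γ(1 − z) denotes the value at 1 − z of the Gamma function analytically continued to negative non-integer arguments. -/
open MeasureTheory Real Filter Set Topology

namespace RegIntAux

/-- The remainder of the exponential series. -/
noncomputable def R (n : ℕ) (x : ℝ) : ℝ := Real.exp (-x) - truncExpPrev n (-x)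

lemma term_eq {x : ℝ} (hx : 0 < x) (k : ℕ) (w : ℝ) :
    (-x) ^ k / (k.factorial : ℝ) * x ^ w
      = ((-1 : ℝ) ^ k / (k.factorial : ℝ)) * x ^ ((k : ℝ) + w) := by
  have h1 : (-x : ℝ) ^ k = (-1) ^ k * x ^ k := by
    rw [← neg_one_mul, mul_pow]
  rw [h1, Real.rpow_add hx, Real.rpow_natCast]
  ring

lemma hasDerivAt_R (n : ℕ) (x : ℝ) : HasDerivAt (R (n + 1)) (-(R n x)) x := by
  have h1 : HasDerivAt (fun y : ℝ => Real.exp (-y)) (-Real.exp (-x)) x := by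
    simpa using (hasDerivAt_neg x).exp
  have h2 : HasDerivAt (fun y : ℝ => truncExpPrev (n + 1) (-y))
      (-(truncExpPrev n (-x))) x := by
    have hterm : ∀ k ∈ Finset.range (n + 1), HasDerivAt
        (fun y : ℝ => (-y) ^ k / (k.factorial : ℝ))
        (((k : ℝ) * (-x) ^ (k - 1) * (-1)) / (k.factorial : ℝ)) x := by
      intro k _
      exact (((hasDerivAt_id x).neg).pow k).div_const _
    have hsum := HasDerivAt.fun_sum hterm
    have hval : (∑ k ∈ Finset.range (n + 1),
        ((k : ℝ) * (-x) ^ (k - 1) * (-1)) / (k.factorial : ℝ))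
        = -(truncExpPrev n (-x)) := by
      rw [Finset.sum_range_succ']
      simp only [truncExpPrev, Nat.cast_zero, zero_mul, Nat.factorial_zero, Nat.cast_one,
        zero_div, add_zero]
      rw [← Finset.sum_neg_distrib]
      apply Finset.sum_congr rfl
      intro i _
      have hfac : ((i + 1).factorial : ℝ) = ((i : ℝ) + 1) * (i.factorial : ℝ) := by
        rw [Nat.factorial_succ]; push_cast; ring
      have hpos : (i.factorial : ℝ) ≠ 0 := by positivity
      have hi1 : (i + 1) - 1 = i := by omega
      rw [hi1, hfac]
      push_cast
      field_simp
    simpa only [truncExpPrev, hval] using hsum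
  have h3 := h1.sub h2
  have hval : -Real.exp (-x) - -truncExpPrev n (-x) = -(R n x) := by
    simp only [R]; ring
  rw [hval] at h3
  exact h3

lemma abs_R_le (n : ℕ) {x : ℝ} (h0 : 0 ≤ x) (h1 : x ≤ 1) : |R n x| ≤ 3 * x ^ n := by
  cases n with
  | zero =>
    simp only [R, truncExpPrev, Finset.range_zero, Finset.sum_empty, sub_zero, pow_zero, mul_one]
    rw [abs_of_nonneg (Real.exp_pos _).le]
    have : Real.exp (-x) ≤ 1 := Real.exp_le_one_iff.mpr (by linarith)
    linarith
  | succ m =>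
    have hx : |(-x : ℝ)| ≤ 1 := by rw [abs_neg, abs_of_nonneg h0]; exact h1
    have hb := Real.exp_bound hx (Nat.succ_pos m)
    have h2 : |(-x : ℝ)| ^ (m + 1) = x ^ (m + 1) := by
      rw [abs_neg, abs_of_nonneg h0]
    have hc : ((m + 1).succ : ℝ) / ((m + 1).factorial * (m + 1)) ≤ 3 := by
      have hfac : (1 : ℝ) ≤ ((m + 1).factorial : ℝ) := by
        exact_mod_cast Nat.one_le_iff_ne_zero.mpr (Nat.factorial_ne_zero _)
      have hm1 : (1 : ℝ) ≤ (m + 1 : ℝ) := by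
        have : (0:ℝ) ≤ (m : ℝ) := Nat.cast_nonneg m
        linarith
      have hden : (m + 1 : ℝ) ≤ ((m + 1).factorial : ℝ) * (m + 1) := by nlinarith
      have hnum : ((m + 1).succ : ℝ) ≤ 3 * (m + 1 : ℝ) := by push_cast; nlinarith
      rw [div_le_iff₀ (by nlinarith)]
      nlinarith
    calc |R (m + 1) x| ≤ |(-x)| ^ (m + 1) * (((m + 1).succ : ℝ) /
          ((m + 1).factorial * (m + 1))) := by
          simpa [R, truncExpPrev] using hb
      _ = x ^ (m + 1) * (((m + 1).succ : ℝ) / ((m + 1).factorial * (m + 1))) := by rw [h2]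
      _ ≤ x ^ (m + 1) * 3 := by
          apply mul_le_mul_of_nonneg_left hc (by positivity)
      _ = 3 * x ^ (m + 1) := by ring

lemma continuous_R (n : ℕ) : Continuous (R n) := by
  unfold R truncExpPrev
  fun_prop

lemma continuousOn_R_rpow (n : ℕ) (w : ℝ) :
    ContinuousOn (fun x => R n x * x ^ (-w)) (Ioi (0 : ℝ)) := by
  apply ((continuous_R n).continuousOn).mul
  exact fun x hx => ((Real.continuousAt_rpow_const x (-w)
    (Or.inl (ne_of_gt hx))).continuousWithinAt)

lemma integrable_R (m : ℕ) (w : ℝ) (h1 : (m : ℝ) < w) (h2 : w < m + 1) :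
    IntegrableOn (fun x => R m x * x ^ (-w)) (Ioi (0 : ℝ)) := by
  have hw0 : 0 < w := lt_of_le_of_lt (Nat.cast_nonneg m) h1
  rw [← Ioc_union_Ioi_eq_Ioi (zero_le_one (α := ℝ))]
  apply IntegrableOn.union
  · -- near zero, dominate by 3 * x ^ ((m : ℝ) - w)
    have hint : IntegrableOn (fun x : ℝ => 3 * x ^ ((m : ℝ) - w)) (Ioc (0 : ℝ) 1) := by
      have : IntervalIntegrable (fun x : ℝ => x ^ ((m : ℝ) - w)) volume 0 1 :=
        intervalIntegral.intervalIntegrable_rpow' (by linarith)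
      rw [intervalIntegrable_iff_integrableOn_Ioc_of_le zero_le_one] at this
      exact this.const_mul 3
    apply Integrable.mono' hint
    · exact ((continuousOn_R_rpow m w).mono Ioc_subset_Ioi_self).aestronglyMeasurable
        measurableSet_Ioc
    · filter_upwards [ae_restrict_mem measurableSet_Ioc] with x hx
      have hx0 : 0 < x := hx.1
      have hx1 : x ≤ 1 := hx.2
      rw [norm_mul, Real.norm_rpow_of_nonneg hx0.le, Real.norm_eq_abs, Real.norm_eq_abs,
        abs_of_nonneg hx0.le]
      calc |R m x| * x ^ (-w) ≤ (3 * x ^ m) * x ^ (-w) := by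
            apply mul_le_mul_of_nonneg_right (abs_R_le m hx0.le hx1)
              (Real.rpow_nonneg hx0.le _)
        _ = 3 * x ^ ((m : ℝ) - w) := by
            rw [← Real.rpow_natCast x m, mul_assoc, ← Real.rpow_add hx0]
            ring_nf
  · -- tail
    have hcongr : ∀ x ∈ Ioi (1 : ℝ), Real.exp (-x) * x ^ (-w)
        - ∑ k ∈ Finset.range m, ((-1 : ℝ) ^ k / (k.factorial : ℝ)) * x ^ ((k : ℝ) + -w)
        = R m x * x ^ (-w) := by
      intro x hx
      have hx0 : (0 : ℝ) < x := lt_trans zero_lt_one hx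
      simp only [R, truncExpPrev, sub_mul, Finset.sum_mul]
      congr 1
      apply Finset.sum_congr rfl
      intro k _
      exact (term_eq hx0 k (-w)).symm
    apply IntegrableOn.congr_fun _ hcongr measurableSet_Ioi
    apply Integrable.sub
    · -- exp(-x) * x^(-w) integrable on Ioi 1
      have hint : IntegrableOn (fun x : ℝ => Real.exp (-x)) (Ioi (1 : ℝ)) := by
        have := exp_neg_integrableOn_Ioi (1 : ℝ) (b := 1) one_pos
        simpa using this
      apply Integrable.mono' hint
      · apply ContinuousOn.aestronglyMeasurable _ measurableSet_Ioi
        apply ContinuousOn.mul (Continuous.continuousOn (by fun_prop))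
        intro x hx
        exact ((Real.continuousAt_rpow_const x (-w)
          (Or.inl (ne_of_gt (lt_trans zero_lt_one hx)))).continuousWithinAt)
      · filter_upwards [ae_restrict_mem measurableSet_Ioi] with x hx
        have hx1 : (1 : ℝ) ≤ x := le_of_lt hx
        have hx0 : (0 : ℝ) ≤ x := by linarith
        rw [norm_mul, Real.norm_eq_abs, abs_of_nonneg (Real.exp_pos _).le,
          Real.norm_rpow_of_nonneg hx0, Real.norm_eq_abs, abs_of_nonneg hx0]
        have hle : x ^ (-w) ≤ 1 := Real.rpow_le_one_of_one_le_of_nonpos hx1 (by linarith)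
        nlinarith [Real.exp_pos (-x), Real.rpow_nonneg hx0 (-w)]
    · apply integrable_finset_sum
      intro k hk
      have hk' : (k : ℝ) ≤ (m : ℝ) - 1 := by
        have hkm := Finset.mem_range.mp hk
        have : (k : ℝ) + 1 ≤ m := by exact_mod_cast hkm
        linarith
      have hexp : (k : ℝ) + -w < -1 := by linarith
      exact (integrableOn_Ioi_rpow_of_lt hexp one_pos).const_mul _

lemma tendsto_R_rpow_atTop (n : ℕ) (p : ℝ) (hp : (n : ℝ) - 1 + p < 0) :
    Tendsto (fun x => R n x * x ^ p) atTop (𝓝 0) := by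
  have hmain : Tendsto (fun x : ℝ => Real.exp (-x) * x ^ p
      - ∑ k ∈ Finset.range n, ((-1 : ℝ) ^ k / (k.factorial : ℝ)) * x ^ ((k : ℝ) + p))
      atTop (𝓝 (0 - ∑ k ∈ Finset.range n, (0 : ℝ))) := by
    apply Tendsto.sub
    · have := tendsto_rpow_mul_exp_neg_mul_atTop_nhds_zero p 1 one_pos
      apply this.congr
      intro x; simp [mul_comm]
    · apply tendsto_finset_sum
      intro k hk
      have hk' : (k : ℝ) ≤ (n : ℝ) - 1 := by
        have hkn := Finset.mem_range.mp hk
        have : (k : ℝ) + 1 ≤ n := by exact_mod_cast hkn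
        linarith
      have ht : Tendsto (fun x : ℝ => x ^ (-(-((k : ℝ) + p)))) atTop (𝓝 0) := by
        apply tendsto_rpow_neg_atTop; linarith
      simpa using (ht.const_mul ((-1 : ℝ) ^ k / (k.factorial : ℝ)))
  simp only [Finset.sum_const_zero, sub_zero] at hmain
  apply hmain.congr'
  filter_upwards [eventually_gt_atTop (0 : ℝ)] with x hx
  simp only [R, truncExpPrev, sub_mul, Finset.sum_mul]
  congr 1
  apply Finset.sum_congr rfl
  intro k _
  exact (term_eq hx k p).symm

lemma tendsto_R_rpow_zero (n : ℕ) (p : ℝ) (hp : 0 < (n : ℝ) + p) :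
    Tendsto (fun x => R n x * x ^ p) (𝓝[>] (0 : ℝ)) (𝓝 0) := by
  have hg : Tendsto (fun x : ℝ => 3 * x ^ ((n : ℝ) + p)) (𝓝[>] (0 : ℝ)) (𝓝 0) := by
    have hc : ContinuousAt (fun x : ℝ => x ^ ((n : ℝ) + p)) 0 :=
      Real.continuousAt_rpow_const 0 _ (Or.inr hp.le)
    have h0 : (0 : ℝ) ^ ((n : ℝ) + p) = 0 := Real.zero_rpow (ne_of_gt hp)
    have ht : Tendsto (fun x : ℝ => x ^ ((n : ℝ) + p)) (𝓝[>] (0 : ℝ))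
        (𝓝 ((0 : ℝ) ^ ((n : ℝ) + p))) := (hc.tendsto).mono_left nhdsWithin_le_nhds
    rw [h0] at ht
    simpa using ht.const_mul (3 : ℝ)
  apply squeeze_zero_norm' _ hg
  filter_upwards [Ioo_mem_nhdsGT (zero_lt_one (α := ℝ))] with x hx
  have hx0 : 0 < x := hx.1
  have hx1 : x ≤ 1 := hx.2.le
  rw [norm_mul, Real.norm_rpow_of_nonneg hx0.le, Real.norm_eq_abs, Real.norm_eq_abs,
    abs_of_nonneg hx0.le]
  calc |R n x| * x ^ p ≤ (3 * x ^ n) * x ^ p := by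
        apply mul_le_mul_of_nonneg_right (abs_R_le n hx0.le hx1) (Real.rpow_nonneg hx0.le _)
    _ = 3 * x ^ ((n : ℝ) + p) := by
        rw [← Real.rpow_natCast x n, mul_assoc, ← Real.rpow_add hx0]

lemma integral_deriv_eq_zero (G G' : ℝ → ℝ)
    (hd : ∀ x ∈ Ioi (0 : ℝ), HasDerivAt G (G' x) x)
    (hi : IntegrableOn G' (Ioi 0))
    (h0 : Tendsto G (𝓝[>] (0 : ℝ)) (𝓝 0))
    (htop : Tendsto G atTop (𝓝 0)) :
    ∫ x in Ioi (0 : ℝ), G' x = 0 := by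
  have key : ∀ a : ℝ, 0 < a → ∫ x in Ioi a, G' x = -G a := by
    intro a ha
    rw [integral_Ioi_of_hasDerivAt_of_tendsto'
      (fun x hx => hd x (lt_of_lt_of_le ha hx))
      (hi.mono_set (Ioi_subset_Ioi ha.le)) htop]
    ring
  set s : ℕ → Set ℝ := fun k => Ioi (((k : ℝ) + 1)⁻¹) with hs
  have hmono : Monotone s := by
    intro i j hij
    apply Ioi_subset_Ioi
    apply inv_anti₀ (by positivity)
    exact add_le_add_left (Nat.cast_le.mpr hij) 1
  have hU : (⋃ k, s k) = Ioi (0 : ℝ) := by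
    ext x
    simp only [hs, mem_iUnion, mem_Ioi]
    constructor
    · rintro ⟨k, hk⟩
      exact lt_trans (by positivity) hk
    · intro hx
      obtain ⟨k, hk⟩ := exists_nat_one_div_lt hx
      exact ⟨k, by rwa [one_div] at hk⟩
  have t1 := tendsto_setIntegral_of_monotone (fun k => measurableSet_Ioi) hmono
    (by rwa [hU])
  rw [hU] at t1
  have hpos : ∀ k : ℕ, (0 : ℝ) < ((k : ℝ) + 1)⁻¹ := fun k => by positivity
  have t2 : Tendsto (fun k : ℕ => ∫ x in s k, G' x) atTop (𝓝 0) := by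
    have ha : Tendsto (fun k : ℕ => ((k : ℝ) + 1)⁻¹) atTop (𝓝[>] (0 : ℝ)) := by
      apply tendsto_nhdsWithin_of_tendsto_nhds_of_eventually_within
      · have := tendsto_one_div_add_atTop_nhds_zero_nat (𝕜 := ℝ)
        simpa [one_div] using this
      · exact Eventually.of_forall (fun k => hpos k)
    have hcomp := (h0.comp ha).neg
    rw [neg_zero] at hcomp
    apply hcomp.congr
    intro k
    simp only [Function.comp_apply, hs]
    rw [key _ (hpos k)]
  exact tendsto_nhds_unique t1 t2

lemma main (m : ℕ) : ∀ w : ℝ, (m : ℝ) < w → w < m + 1 →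
    ∫ x in Ioi (0 : ℝ), R m x * x ^ (-w) = Real.Gamma (1 - w) := by
  induction m with
  | zero =>
    intro w h1 h2
    simp only [Nat.cast_zero, zero_add] at h1 h2
    rw [Real.Gamma_eq_integral (by linarith : (0 : ℝ) < 1 - w)]
    have he : (1 : ℝ) - w - 1 = -w := by ring
    rw [he]
    apply setIntegral_congr_fun measurableSet_Ioi
    intro x _
    simp [R, truncExpPrev]
  | succ n ih =>
    intro w h1 h2
    push_cast at h1 h2
    have hn0 : (0 : ℝ) ≤ (n : ℝ) := Nat.cast_nonneg n
    have hw1 : (1 : ℝ) < w := by linarith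
    have hne : (1 : ℝ) - w ≠ 0 := by linarith
    set G : ℝ → ℝ := fun x => R (n + 1) x * x ^ (1 - w) / (1 - w) with hGdef
    have hG : ∀ x ∈ Ioi (0 : ℝ), HasDerivAt G
        (R (n + 1) x * x ^ (-w) - R n x * x ^ (1 - w) / (1 - w)) x := by
      intro x hx
      have hx0 : x ≠ 0 := ne_of_gt hx
      have hrd : HasDerivAt (fun y : ℝ => y ^ (1 - w)) ((1 - w) * x ^ (1 - w - 1)) x :=
        Real.hasDerivAt_rpow_const (Or.inl hx0)
      have hmul := ((hasDerivAt_R n x).mul hrd).div_const (1 - w)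
      refine hmul.congr_deriv ?_
      have he : (1 : ℝ) - w - 1 = -w := by ring
      rw [he]
      field_simp
      ring
    have hi1 : IntegrableOn (fun x => R (n + 1) x * x ^ (-w)) (Ioi (0 : ℝ)) :=
      integrable_R (n + 1) w (by push_cast; linarith) (by push_cast; linarith)
    have hi2 : IntegrableOn (fun x => R n x * x ^ (-(w - 1))) (Ioi (0 : ℝ)) :=
      integrable_R n (w - 1) (by linarith) (by linarith)
    have hee : (-(w - 1) : ℝ) = 1 - w := by ring
    have hi2' : IntegrableOn (fun x => R n x * x ^ (1 - w) / (1 - w)) (Ioi (0 : ℝ)) := by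
      have := hi2.div_const (1 - w)
      simpa [hee, IntegrableOn] using this
    have hzero : ∫ x in Ioi (0 : ℝ),
        (R (n + 1) x * x ^ (-w) - R n x * x ^ (1 - w) / (1 - w)) = 0 := by
      apply integral_deriv_eq_zero G _ hG (hi1.sub hi2')
      · have := (tendsto_R_rpow_zero (n + 1) (1 - w) (by push_cast; linarith)).div_const (1 - w)
        simpa [hGdef] using this
      · have := (tendsto_R_rpow_atTop (n + 1) (1 - w) (by push_cast; linarith)).div_const (1 - w)
        simpa [hGdef] using this
    rw [integral_sub hi1 hi2'] at hzero
    have heq : ∫ x in Ioi (0 : ℝ), R (n + 1) x * x ^ (-w)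
        = ∫ x in Ioi (0 : ℝ), R n x * x ^ (1 - w) / (1 - w) := by linarith
    rw [heq, integral_div]
    have hih := ih (w - 1) (by linarith) (by linarith)
    rw [show (1 : ℝ) - (w - 1) = (1 - w) + 1 by ring] at hih
    rw [Real.Gamma_add_one hne] at hih
    rw [show (fun x => R n x * x ^ (1 - w)) = (fun x => R n x * x ^ (-(w - 1))) by
      funext x; rw [hee]]
    rw [hih]
    field_simp

end RegIntAux

/-- For non-integer `z > 0` with `n = ⌊z⌋`,
`∫₀^∞ (e^{-x} - e_{n-1}(-x)) x^{-z} dx = Γ(1 - z)`. -/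
theorem regularized_integral_eq_Gamma_one_sub (z : ℝ) (hz : 0 < z)
    (hnint : ∀ m : ℤ, z ≠ (m : ℝ)) :
    ∫ x in Set.Ioi (0 : ℝ), (Real.exp (-x) - truncExpPrev ⌊z⌋₊ (-x)) * x ^ (-z)
      = Real.Gamma (1 - z) := by
  have h1 : (⌊z⌋₊ : ℝ) < z := by
    rcases lt_or_eq_of_le (Nat.floor_le hz.le) with h | h
    · exact h
    · exact absurd h.symm (by simpa using hnint (⌊z⌋₊ : ℤ))
  have h2 : z < ⌊z⌋₊ + 1 := Nat.lt_floor_add_one z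
  exact RegIntAux.main ⌊z⌋₊ z h1 (by exact_mod_cast h2)
end

section
/- For every real number z > 0 that is not an integer, with n = ⌊z⌋, the integration-by-parts reduction formula holds: ∫₀^∞ (e^{−x} − e_n(−x)) · x^{−z−1} dx = −(1/z) · ∫₀^∞ (e^{−x} − e_{n−1}(−x)) · x^{−z} dx, where both integrals converge. -/
open MeasureTheory Real Filter Set

/-- Truncated exponential polynomial `e_n(x) = ∑_{k=0}^{n} x^k / k!`.
Note that `e_{n-1}(x)` corresponds to `∑ k ∈ Finset.range n, x^k / k!`. -/
noncomputable def truncExp (n : ℕ) (x : ℝ) : ℝ :=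
  ∑ k ∈ Finset.range (n + 1), x ^ k / (k.factorial : ℝ)

lemma bound_tail (m : ℕ) {x : ℝ} (hx : 1 ≤ x) :
    |Real.exp (-x) - ∑ k ∈ Finset.range m, (-x) ^ k / (k.factorial : ℝ)|
      ≤ (m + 1) * x ^ ((m : ℝ) - 1) := by
  have hx0 : 0 < x := lt_of_lt_of_le one_pos hx
  have hexp : Real.exp (-x) ≤ x ^ ((m : ℝ) - 1) := by
    have h1 : Real.exp (-x) ≤ x⁻¹ := by
      rw [Real.exp_neg]
      exact inv_anti₀ hx0 (Real.add_one_le_exp x |>.trans' (by linarith))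
    calc Real.exp (-x) ≤ x⁻¹ := h1
      _ = x ^ ((-1 : ℝ)) := by rw [Real.rpow_neg_one]
      _ ≤ x ^ ((m : ℝ) - 1) := Real.rpow_le_rpow_of_exponent_le hx (by have : (0:ℝ) ≤ m := Nat.cast_nonneg m; linarith)
  have hsum : |∑ k ∈ Finset.range m, (-x) ^ k / (k.factorial : ℝ)|
      ≤ (m : ℝ) * x ^ ((m : ℝ) - 1) := by
    calc |∑ k ∈ Finset.range m, (-x) ^ k / (k.factorial : ℝ)|
        ≤ ∑ k ∈ Finset.range m, |(-x) ^ k / (k.factorial : ℝ)| :=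
          Finset.abs_sum_le_sum_abs _ _
      _ ≤ ∑ k ∈ Finset.range m, x ^ ((m : ℝ) - 1) := by
          apply Finset.sum_le_sum
          intro k hk
          have hk' : (k : ℝ) ≤ (m : ℝ) - 1 := by
            have := Finset.mem_range.mp hk
            have : (k : ℝ) + 1 ≤ (m : ℝ) := by exact_mod_cast this
            linarith
          have h1 : |(-x) ^ k / (k.factorial : ℝ)| ≤ x ^ k := by
            rw [abs_div, abs_pow, abs_neg, abs_of_pos hx0, abs_of_pos
              (by positivity : (0:ℝ) < (k.factorial : ℝ))]
            apply div_le_self (by positivity)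
            exact_mod_cast Nat.one_le_iff_ne_zero.mpr k.factorial_ne_zero
          calc |(-x) ^ k / (k.factorial : ℝ)| ≤ x ^ k := h1
            _ = x ^ ((k : ℝ)) := (Real.rpow_natCast x k).symm
            _ ≤ x ^ ((m : ℝ) - 1) := Real.rpow_le_rpow_of_exponent_le hx hk'
      _ = (m : ℝ) * x ^ ((m : ℝ) - 1) := by
          rw [Finset.sum_const, Finset.card_range, nsmul_eq_mul]
  calc |Real.exp (-x) - ∑ k ∈ Finset.range m, (-x) ^ k / (k.factorial : ℝ)|
      ≤ |Real.exp (-x)| + |∑ k ∈ Finset.range m, (-x) ^ k / (k.factorial : ℝ)| :=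
        abs_sub _ _
    _ ≤ x ^ ((m : ℝ) - 1) + (m : ℝ) * x ^ ((m : ℝ) - 1) := by
        rw [abs_of_pos (Real.exp_pos _)]; exact add_le_add hexp hsum
    _ = (m + 1) * x ^ ((m : ℝ) - 1) := by ring

lemma bound_near0 (m : ℕ) {x : ℝ} (hx : 0 ≤ x) (hx1 : x ≤ 1) :
    |Real.exp (-x) - ∑ k ∈ Finset.range m, (-x) ^ k / (k.factorial : ℝ)|
      ≤ (m + 2) * x ^ m := by
  rcases Nat.eq_zero_or_pos m with rfl | hm
  · simp only [Finset.range_zero, Finset.sum_empty, sub_zero, pow_zero, mul_one]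
    rw [abs_of_pos (Real.exp_pos _)]
    calc Real.exp (-x) ≤ Real.exp 0 := Real.exp_le_exp.mpr (by linarith)
      _ = 1 := Real.exp_zero
      _ ≤ (0:ℕ) + 2 := by norm_num
  · have habs : |(-x)| ≤ 1 := by rw [abs_neg, abs_of_nonneg hx]; exact hx1
    have h := Real.exp_bound habs hm
    have h2 : |(-x)| ^ m = x ^ m := by rw [abs_neg, abs_of_nonneg hx]
    have h3 : ((m.succ : ℝ) / (m.factorial * m)) ≤ (m : ℝ) + 2 := by
      rw [div_le_iff₀ (by positivity)]
      have h4 : (1 : ℝ) ≤ (m.factorial : ℝ) * m := by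
        have : 1 ≤ m.factorial * m := Nat.one_le_iff_ne_zero.mpr
          (Nat.mul_ne_zero m.factorial_ne_zero (Nat.pos_iff_ne_zero.mp hm))
        exact_mod_cast this
      have h5 := mul_le_mul_of_nonneg_left h4 (show (0:ℝ) ≤ (m:ℝ)+2 by positivity)
      push_cast
      nlinarith
    calc |Real.exp (-x) - ∑ k ∈ Finset.range m, (-x) ^ k / (k.factorial : ℝ)|
        ≤ |(-x)| ^ m * ((m.succ : ℝ) / (m.factorial * m)) := by
          convert h using 3 <;> push_cast <;> ring
      _ = x ^ m * ((m.succ : ℝ) / (m.factorial * m)) := by rw [h2]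
      _ ≤ x ^ m * ((m : ℝ) + 2) := by
          apply mul_le_mul_of_nonneg_left h3 (by positivity)
      _ = (m + 2) * x ^ m := by ring

lemma integrable_aux (m : ℕ) (w : ℝ) (h1 : -1 < (m : ℝ) + w) (h2 : (m : ℝ) - 1 + w < -1) :
    IntegrableOn
      (fun x : ℝ => (Real.exp (-x) - ∑ k ∈ Finset.range m, (-x) ^ k / (k.factorial : ℝ)) * x ^ w)
      (Set.Ioi 0) := by
  have hcont : ContinuousOn
      (fun x : ℝ => (Real.exp (-x) - ∑ k ∈ Finset.range m, (-x) ^ k / (k.factorial : ℝ)) * x ^ w)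
      (Set.Ioi 0) := by
    apply ContinuousOn.mul
    · apply Continuous.continuousOn
      exact (Real.continuous_exp.comp continuous_neg).sub
        (continuous_finset_sum _ fun k _ =>
          ((continuous_neg.pow k).div_const _))
    · intro x hx
      exact (Real.continuousAt_rpow_const x w (Or.inl (ne_of_gt hx))).continuousWithinAt
  have hsplit : Set.Ioi (0:ℝ) = Set.Ioc 0 1 ∪ Set.Ioi 1 := by
    ext x; simp only [Set.mem_Ioi, Set.mem_union, Set.mem_Ioc]
    constructor
    · intro h; rcases le_or_gt x 1 with h' | h'
      · exact Or.inl ⟨h, h'⟩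
      · exact Or.inr h'
    · rintro (⟨h, _⟩ | h) <;> linarith
  rw [hsplit]
  apply IntegrableOn.union
  · -- on Ioc 0 1
    have hg : IntegrableOn (fun x : ℝ => ((m:ℝ) + 2) * x ^ ((m:ℝ) + w)) (Set.Ioc 0 1) := by
      apply Integrable.const_mul
      have := intervalIntegral.intervalIntegrable_rpow' (r := (m:ℝ) + w) h1 (a := 0) (b := 1)
      rwa [intervalIntegrable_iff_integrableOn_Ioc_of_le (by norm_num)] at this
    apply Integrable.mono' hg
    · exact (hcont.mono (Set.Ioc_subset_Ioi_self)).aestronglyMeasurable measurableSet_Ioc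
    · filter_upwards [ae_restrict_mem measurableSet_Ioc] with x hx
      have hx0 : 0 < x := hx.1
      rw [Real.norm_eq_abs, abs_mul, abs_of_pos (Real.rpow_pos_of_pos hx0 w)]
      calc |Real.exp (-x) - ∑ k ∈ Finset.range m, (-x) ^ k / (k.factorial : ℝ)| * x ^ w
          ≤ (((m:ℝ) + 2) * x ^ m) * x ^ w := by
            apply mul_le_mul_of_nonneg_right (bound_near0 m hx0.le hx.2)
              (le_of_lt (Real.rpow_pos_of_pos hx0 w))
        _ = ((m:ℝ) + 2) * x ^ ((m:ℝ) + w) := by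
            rw [Real.rpow_add hx0, ← Real.rpow_natCast x m]; ring
  · -- on Ioi 1
    have hg : IntegrableOn (fun x : ℝ => ((m:ℝ) + 1) * x ^ ((m:ℝ) - 1 + w)) (Set.Ioi 1) := by
      exact (integrableOn_Ioi_rpow_of_lt h2 one_pos).const_mul _
    apply Integrable.mono' hg
    · exact (hcont.mono (fun x (hx : x ∈ Set.Ioi (1:ℝ)) => (lt_trans one_pos hx : (0:ℝ) < x))).aestronglyMeasurable measurableSet_Ioi
    · filter_upwards [ae_restrict_mem measurableSet_Ioi] with x hx
      have hx1 : (1:ℝ) ≤ x := le_of_lt hx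
      have hx0 : 0 < x := lt_of_lt_of_le one_pos hx1
      rw [Real.norm_eq_abs, abs_mul, abs_of_pos (Real.rpow_pos_of_pos hx0 w)]
      calc |Real.exp (-x) - ∑ k ∈ Finset.range m, (-x) ^ k / (k.factorial : ℝ)| * x ^ w
          ≤ (((m:ℝ) + 1) * x ^ ((m:ℝ) - 1)) * x ^ w :=
            mul_le_mul_of_nonneg_right (bound_tail m hx1)
              (le_of_lt (Real.rpow_pos_of_pos hx0 w))
        _ = ((m:ℝ) + 1) * x ^ ((m:ℝ) - 1 + w) := by
            rw [Real.rpow_add hx0]; ring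

lemma hasDerivAt_truncSum (m : ℕ) (x : ℝ) :
    HasDerivAt (fun y : ℝ => ∑ k ∈ Finset.range (m + 1), (-y) ^ k / (k.factorial : ℝ))
      (-(∑ k ∈ Finset.range m, (-x) ^ k / (k.factorial : ℝ))) x := by
  have h : ∀ k ∈ Finset.range (m + 1),
      HasDerivAt (fun y : ℝ => (-y) ^ k / (k.factorial : ℝ))
        ((k : ℝ) * (-x) ^ (k - 1) * (-1) / (k.factorial : ℝ)) x := by
    intro k _
    exact (((hasDerivAt_pow k (-x)).comp x (hasDerivAt_neg x))).div_const _
  have hsum := HasDerivAt.fun_sum h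
  convert! hsum using 1
  rw [Finset.sum_range_succ']
  simp only [Nat.cast_zero, zero_mul, zero_div, add_zero]
  rw [← Finset.sum_neg_distrib]
  apply Finset.sum_congr rfl
  intro k _
  have hfac : ((k+1).factorial : ℝ) = ((k:ℝ) + 1) * (k.factorial : ℝ) := by
    rw [Nat.factorial_succ]; push_cast; ring
  have hk1 : ((k:ℝ) + 1) ≠ 0 := by positivity
  have hkfac : (k.factorial : ℝ) ≠ 0 := by positivity
  rw [hfac, Nat.add_sub_cancel]; push_cast; field_simp

/-- Integration-by-parts reduction: for non-integer `z > 0` with `n = ⌊z⌋`, both integrals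
converge and
`∫₀^∞ (e^{-x} - e_n(-x)) x^{-z-1} dx = -(1/z) ∫₀^∞ (e^{-x} - e_{n-1}(-x)) x^{-z} dx`. -/
theorem integration_by_parts_reduction (z : ℝ) (hz : 0 < z) (hnint : ∀ m : ℤ, z ≠ (m : ℝ)) :
    IntegrableOn (fun x : ℝ => (Real.exp (-x) - truncExp ⌊z⌋₊ (-x)) * x ^ (-z - 1))
      (Set.Ioi 0) ∧
    IntegrableOn (fun x : ℝ => (Real.exp (-x) - truncExpPrev ⌊z⌋₊ (-x)) * x ^ (-z))
      (Set.Ioi 0) ∧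
    ∫ x in Set.Ioi (0 : ℝ), (Real.exp (-x) - truncExp ⌊z⌋₊ (-x)) * x ^ (-z - 1)
      = -(1 / z) *
        ∫ x in Set.Ioi (0 : ℝ), (Real.exp (-x) - truncExpPrev ⌊z⌋₊ (-x)) * x ^ (-z) := by
  set n := ⌊z⌋₊ with hn
  have hn1 : (n : ℝ) < z := by
    rcases lt_or_eq_of_le (Nat.floor_le hz.le) with h | h
    · exact h
    · exact absurd h.symm (hnint n)
  have hn2 : z < (n : ℝ) + 1 := by exact_mod_cast Nat.lt_floor_add_one z
  -- Integrability of the first integrand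
  have I1 : IntegrableOn (fun x : ℝ => (Real.exp (-x) - truncExp n (-x)) * x ^ (-z - 1))
      (Set.Ioi 0) := by
    have := integrable_aux (n + 1) (-z - 1) (by push_cast; linarith) (by push_cast; linarith)
    simpa only [truncExp] using this
  have I2 : IntegrableOn (fun x : ℝ => (Real.exp (-x) - truncExpPrev n (-x)) * x ^ (-z))
      (Set.Ioi 0) := by
    have := integrable_aux n (-z) (by push_cast; linarith) (by push_cast; linarith)
    simpa only [truncExpPrev] using this
  refine ⟨I1, I2, ?_⟩
  -- The potential function
  set F : ℝ → ℝ := fun x => -(1 / z) * ((Real.exp (-x) - truncExp n (-x)) * x ^ (-z)) with hF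
  set f' : ℝ → ℝ := fun x =>
    (1 / z) * ((Real.exp (-x) - truncExpPrev n (-x)) * x ^ (-z))
      + (Real.exp (-x) - truncExp n (-x)) * x ^ (-z - 1) with hf'
  have hz0 : z ≠ 0 := ne_of_gt hz
  have hF0 : F 0 = 0 := by
    simp only [hF, Real.zero_rpow (neg_ne_zero.mpr hz0), mul_zero, zero_mul, neg_zero]
  -- derivative
  have hderiv : ∀ x ∈ Set.Ioi (0:ℝ), HasDerivAt F (f' x) x := by
    intro x hx
    have hx0 : (0:ℝ) < x := hx
    have he : HasDerivAt (fun y : ℝ => Real.exp (-y)) (-(Real.exp (-x))) x := by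
      have := (Real.hasDerivAt_exp (-x)).comp x (hasDerivAt_neg x)
      simpa [mul_comm, Function.comp_def] using this
    have hs : HasDerivAt (fun y : ℝ => truncExp n (-y)) (-(truncExpPrev n (-x))) x := by
      simpa only [truncExp, truncExpPrev] using hasDerivAt_truncSum n x
    have hfd : HasDerivAt (fun y : ℝ => Real.exp (-y) - truncExp n (-y))
        (-(Real.exp (-x) - truncExpPrev n (-x))) x := by
      have := he.fun_sub hs
      convert! this using 1; ring
    have hrd : HasDerivAt (fun y : ℝ => y ^ (-z)) (-z * x ^ (-z - 1)) x := by
      have := Real.hasDerivAt_rpow_const (p := -z) (Or.inl (ne_of_gt hx0))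
      simpa using this
    have := (hfd.fun_mul hrd).const_mul (-(1 / z))
    convert! this using 1
    simp only [hf']
    field_simp
    ring
  -- continuity at 0 from the right
  have hcont : ContinuousWithinAt F (Set.Ici 0) 0 := by
    rw [ContinuousWithinAt, hF0]
    have hmem : ∀ᶠ x in nhdsWithin 0 (Set.Ici (0:ℝ)), x ∈ Set.Icc (0:ℝ) 1 := by
      have h1 : Set.Iic (1:ℝ) ∈ nhdsWithin 0 (Set.Ici (0:ℝ)) :=
        mem_nhdsWithin_of_mem_nhds (Iic_mem_nhds one_pos)
      have h2 : Set.Ici (0:ℝ) ∈ nhdsWithin 0 (Set.Ici (0:ℝ)) := self_mem_nhdsWithin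
      filter_upwards [h1, h2] with x hx1 hx2
      exact ⟨hx2, hx1⟩
    have ha : (0:ℝ) < ((n:ℝ) + 1) - z := by linarith
    apply squeeze_zero_norm'
      (a := fun x => (1 / z) * ((n:ℝ) + 3) * x ^ (((n:ℝ) + 1) - z))
    · filter_upwards [hmem] with x hx
      rcases eq_or_lt_of_le hx.1 with h | h
      · rw [← h]
        simp [hF0, Real.zero_rpow (ne_of_gt ha)]
      · have hb := bound_near0 (n + 1) h.le hx.2
        rw [hF, Real.norm_eq_abs, abs_mul, abs_mul,
          abs_of_pos (Real.rpow_pos_of_pos h (-z))]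
        have habs : |(-(1 / z))| = 1 / z := by
          rw [abs_neg, abs_of_pos (by positivity)]
        rw [habs]
        have hb' : |Real.exp (-x) - truncExp n (-x)| ≤ ((n:ℝ) + 3) * x ^ (n + 1) := by
          simp only [truncExp]
          convert hb using 2
          push_cast; ring
        calc 1 / z * (|Real.exp (-x) - truncExp n (-x)| * x ^ (-z))
            ≤ 1 / z * ((((n:ℝ) + 3) * x ^ (n + 1)) * x ^ (-z)) := by
              apply mul_le_mul_of_nonneg_left _ (by positivity)
              exact mul_le_mul_of_nonneg_right hb' (le_of_lt (Real.rpow_pos_of_pos h _))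
          _ = (1 / z) * ((n:ℝ) + 3) * x ^ (((n:ℝ) + 1) - z) := by
              rw [show (((n:ℝ) + 1) - z) = ((n:ℝ) + 1) + (-z) by ring,
                Real.rpow_add h, ← Real.rpow_natCast x (n + 1)]
              push_cast; ring
    · have : Tendsto (fun x : ℝ => x ^ (((n:ℝ) + 1) - z)) (nhds 0) (nhds 0) := by
        have hc := (Real.continuousAt_rpow_const 0 (((n:ℝ) + 1) - z)
          (Or.inr ha.le)).tendsto
        rwa [Real.zero_rpow (ne_of_gt ha)] at hc
      have h2 := (this.const_mul ((1 / z) * ((n:ℝ) + 3))).mono_left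
        (nhdsWithin_le_nhds (s := Set.Ici (0:ℝ)))
      simpa using h2
  -- limit at infinity
  have htop : Tendsto F atTop (nhds 0) := by
    apply squeeze_zero_norm' (a := fun x => (1 / z) * ((n:ℝ) + 2) * x ^ ((n:ℝ) - z))
    · filter_upwards [eventually_ge_atTop (1:ℝ)] with x hx1
      have hx0 : (0:ℝ) < x := lt_of_lt_of_le one_pos hx1
      have hb := bound_tail (n + 1) hx1
      have hb' : |Real.exp (-x) - truncExp n (-x)| ≤ ((n:ℝ) + 2) * x ^ ((n:ℝ)) := by
        simp only [truncExp]
        convert hb using 2 <;> push_cast <;> ring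
      rw [hF, Real.norm_eq_abs, abs_mul, abs_mul,
        abs_of_pos (Real.rpow_pos_of_pos hx0 (-z))]
      have habs : |(-(1 / z))| = 1 / z := by
        rw [abs_neg, abs_of_pos (by positivity)]
      rw [habs]
      calc 1 / z * (|Real.exp (-x) - truncExp n (-x)| * x ^ (-z))
          ≤ 1 / z * ((((n:ℝ) + 2) * x ^ ((n:ℝ))) * x ^ (-z)) := by
            apply mul_le_mul_of_nonneg_left _ (by positivity)
            exact mul_le_mul_of_nonneg_right hb' (le_of_lt (Real.rpow_pos_of_pos hx0 _))
        _ = (1 / z) * ((n:ℝ) + 2) * x ^ ((n:ℝ) - z) := by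
            rw [show ((n:ℝ) - z) = (n:ℝ) + (-z) by ring, Real.rpow_add hx0]
            ring
    · have h := tendsto_rpow_neg_atTop (show (0:ℝ) < z - n by linarith)
      have h2 : Tendsto (fun x : ℝ => x ^ ((n:ℝ) - z)) atTop (nhds 0) := by
        convert h using 2; ring
      have := h2.const_mul ((1 / z) * ((n:ℝ) + 2))
      simpa using this
  -- integrability of the derivative
  have f'int : IntegrableOn f' (Set.Ioi 0) := (I2.const_mul (1 / z)).add I1
  have key := integral_Ioi_of_hasDerivAt_of_tendsto hcont hderiv f'int htop
  rw [hF0, sub_zero] at key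
  have hsplit : ∫ x in Set.Ioi (0:ℝ), f' x
      = (1 / z) * (∫ x in Set.Ioi (0:ℝ), (Real.exp (-x) - truncExpPrev n (-x)) * x ^ (-z))
        + ∫ x in Set.Ioi (0:ℝ), (Real.exp (-x) - truncExp n (-x)) * x ^ (-z - 1) := by
    rw [hf']
    rw [integral_add (I2.const_mul (1 / z)) I1]
    rw [MeasureTheory.integral_const_mul]
  rw [key] at hsplit
  linarith [hsplit]
end

section
/- For every real number z > 0 that is not an integer, with n = ⌊z⌋, the function x ↦ (e^{−x} − e_{n−1}(−x)) · x^{−z} is Lebesgue integrable on the interval (0, ∞). -/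
open MeasureTheory Real Filter Set

/-- For non-integer `z > 0` with `n = ⌊z⌋`, the function
`x ↦ (e^{-x} - e_{n-1}(-x)) x^{-z}` is Lebesgue integrable on `(0, ∞)`. -/
theorem regularized_integrand_integrableOn (z : ℝ) (hz : 0 < z)
    (hnint : ∀ m : ℤ, z ≠ (m : ℝ)) :
    IntegrableOn (fun x : ℝ => (Real.exp (-x) - truncExpPrev ⌊z⌋₊ (-x)) * x ^ (-z))
      (Set.Ioi 0) := by
  set n : ℕ := ⌊z⌋₊ with hn
  have hnz : (n : ℝ) < z := by
    rcases lt_or_eq_of_le (Nat.floor_le hz.le) with h | h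
    · exact h
    · exact absurd h.symm (hnint n ∘ (by exact_mod_cast ·))
  have hzn : z < (n : ℝ) + 1 := by exact_mod_cast Nat.lt_floor_add_one z
  set f : ℝ → ℝ := fun x : ℝ => (Real.exp (-x) - truncExpPrev n (-x)) * x ^ (-z) with hf
  have hcont : ContinuousOn f (Ioi 0) := by
    apply ContinuousOn.mul
    · exact Continuous.continuousOn (by continuity)
    · exact fun x hx => (Real.continuousAt_rpow_const x (-z) (Or.inl (ne_of_gt hx))).continuousWithinAt
  have hmeas : ∀ s ⊆ Ioi (0:ℝ), MeasurableSet s → AEStronglyMeasurable f (volume.restrict s) :=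
    fun s hs hms => (hcont.mono hs).aestronglyMeasurable hms
  -- split
  have hsplit : Ioi (0:ℝ) = Ioc 0 1 ∪ Ioi 1 := by
    rw [Set.Ioc_union_Ioi_eq_Ioi]; norm_num
  rw [hsplit]
  apply IntegrableOn.union
  · -- near 0
    set C : ℝ := max 1 ((n + 1 : ℝ) / (n.factorial * n)) with hC
    have hbound : ∀ x ∈ Ioc (0:ℝ) 1, ‖f x‖ ≤ C * x ^ ((n:ℝ) - z) := by
      intro x hx
      obtain ⟨hx0, hx1⟩ := hx
      have hkey : |Real.exp (-x) - truncExpPrev n (-x)| ≤ C * x ^ n := by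
        rcases Nat.eq_zero_or_pos n with h0 | hpos
        · simp only [h0, truncExpPrev, Finset.range_zero, Finset.sum_empty, sub_zero, pow_zero]
          rw [abs_of_pos (Real.exp_pos _)]
          calc Real.exp (-x) ≤ 1 := Real.exp_le_one_iff.mpr (by linarith)
            _ ≤ C * 1 := by rw [mul_one]; exact le_max_left _ _
        · have habs : |(-x)| ≤ 1 := by rw [abs_neg, abs_of_pos hx0]; exact hx1
          have := Real.exp_bound habs hpos
          simp only [truncExpPrev]
          refine this.trans ?_
          rw [abs_neg, abs_of_pos hx0]
          calc x ^ n * ((n.succ : ℝ) / (n.factorial * n))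
              = ((n + 1 : ℝ) / (n.factorial * n)) * x ^ n := by push_cast; ring
            _ ≤ C * x ^ n := mul_le_mul_of_nonneg_right (le_max_right _ _) (by positivity)
      have hrw : x ^ ((n:ℝ) - z) = x ^ n * x ^ (-z) := by
        rw [sub_eq_add_neg, Real.rpow_add hx0, Real.rpow_natCast]
      rw [hrw, hf]
      calc ‖(Real.exp (-x) - truncExpPrev n (-x)) * x ^ (-z)‖
          = |Real.exp (-x) - truncExpPrev n (-x)| * |x ^ (-z)| := by
            rw [norm_mul]; rfl
        _ ≤ (C * x ^ n) * (x ^ (-z)) := by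
            apply mul_le_mul hkey (le_of_eq (abs_of_nonneg (Real.rpow_nonneg hx0.le _)))
              (abs_nonneg _) (by positivity)
        _ = C * (x ^ n * x ^ (-z)) := by ring
    have hg : IntegrableOn (fun x : ℝ => C * x ^ ((n:ℝ) - z)) (Ioc 0 1) := by
      apply Integrable.const_mul
      have h1 : (-1:ℝ) < (n:ℝ) - z := by linarith
      have := intervalIntegral.intervalIntegrable_rpow' (a := 0) (b := 1) h1
      rwa [intervalIntegrable_iff, uIoc_of_le zero_le_one] at this
    exact Integrable.mono' hg (hmeas _ Ioc_subset_Ioi_self measurableSet_Ioc)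
      (Filter.eventually_of_mem (self_mem_ae_restrict measurableSet_Ioc) hbound)
  · -- near ∞
    have h1 : IntegrableOn (fun x : ℝ => Real.exp (-x) * x ^ (-z)) (Ioi 1) := by
      have hexp : IntegrableOn (fun x : ℝ => Real.exp (-x)) (Ioi 1) := by
        simpa using exp_neg_integrableOn_Ioi 1 (one_pos (α := ℝ))
      apply Integrable.mono' hexp
      · apply ContinuousOn.aestronglyMeasurable _ measurableSet_Ioi
        apply ContinuousOn.mul (Continuous.continuousOn (Real.continuous_exp.comp continuous_neg))
        exact fun x hx => (Real.continuousAt_rpow_const x (-z)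
          (Or.inl (lt_trans one_pos hx).ne')).continuousWithinAt
      · filter_upwards [self_mem_ae_restrict measurableSet_Ioi] with x hx
        have hx1 : (1:ℝ) ≤ x := le_of_lt hx
        have hx0 : (0:ℝ) < x := lt_of_lt_of_le one_pos hx1
        rw [norm_mul, Real.norm_eq_abs, abs_of_pos (Real.exp_pos _), Real.norm_eq_abs,
          abs_of_nonneg (Real.rpow_nonneg hx0.le _)]
        have : x ^ (-z) ≤ 1 := Real.rpow_le_one_of_one_le_of_nonpos hx1 (by linarith)
        nlinarith [Real.exp_pos (-x)]
    have h2 : IntegrableOn (fun x : ℝ => ∑ k ∈ Finset.range n,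
        ((-1:ℝ) ^ k / k.factorial) * x ^ ((k:ℝ) - z)) (Ioi 1) := by
      apply integrable_finset_sum
      intro k hk
      apply Integrable.const_mul
      apply integrableOn_Ioi_rpow_of_lt _ one_pos
      have : (k:ℝ) + 1 ≤ (n:ℝ) := by exact_mod_cast Finset.mem_range.mp hk
      linarith
    have h3 : IntegrableOn (fun x : ℝ => Real.exp (-x) * x ^ (-z) - ∑ k ∈ Finset.range n,
        ((-1:ℝ) ^ k / k.factorial) * x ^ ((k:ℝ) - z)) (Ioi 1) := h1.sub h2
    apply IntegrableOn.congr_fun h3 _ measurableSet_Ioi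
    intro x hx
    have hx0 : (0:ℝ) < x := lt_trans one_pos hx
    simp only [hf, truncExpPrev]
    rw [sub_mul, Finset.sum_mul]
    congr 1
    symm
    apply Finset.sum_congr rfl
    intro k _
    rw [sub_eq_add_neg, Real.rpow_add hx0, Real.rpow_natCast, neg_pow]
    ring
end
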